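/- arXiv:1310.7623 — 5 statements merged into one kernel-verified Lean document; each statement's English description precedes it below -/
import Mathlib

section
/- Let p be an odd prime and let G = ℤ_p ⋉ ℤ_p^I be the semidirect product where a fixed topological generator of the first factor acts on the product ℤ_p^I by multiplication by a fixed scalar 1+λ with λ ∈ pℤ_p. Then every finitely generated closed subgroup C of G satisfies [C, C] ⊆ C^p, i.e., G is locally powerful. -/
/-- Topology on a semidirect product, induced from the product topology. -/
instance semidirectTopology {N H : Type*} [Group N] [Group H] [TopologicalSpace N]
    [TopologicalSpace H] (φ : H →* MulAut N) : TopologicalSpace (N ⋊[φ] H) :=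
  TopologicalSpace.induced (fun g => (g.left, g.right)) inferInstance

/-- The group `G = ℤ_p ⋉ ℤ_p^I` with the `ℤ_p`-factor acting through `φ`. -/
abbrev thetaAbelianGroup (p : ℕ) [Fact p.Prime] (I : Type*)
    (φ : Multiplicative ℤ_[p] →* MulAut (Multiplicative (I → ℤ_[p]))) : Type _ :=
  Multiplicative (I → ℤ_[p]) ⋊[φ] Multiplicative ℤ_[p]

open SemidirectProduct Multiplicative Set
open scoped commutatorElement

set_option maxHeartbeats 8000000

section SDPaux

variable {N H : Type*} [Group N] [Group H] [TopologicalSpace N] [TopologicalSpace H]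
  (φ : H →* MulAut N)

lemma sdp_inducing : Topology.IsInducing (fun g : N ⋊[φ] H => (g.left, g.right)) := ⟨rfl⟩

lemma sdp_cont_left : Continuous fun g : N ⋊[φ] H => g.left :=
  continuous_fst.comp (sdp_inducing φ).continuous

lemma sdp_cont_right : Continuous fun g : N ⋊[φ] H => g.right :=
  continuous_snd.comp (sdp_inducing φ).continuous

/-- Homeomorphism of the semidirect product with the product. -/
def sdpHomeo : (N ⋊[φ] H) ≃ₜ N × H where
  toFun g := (g.left, g.right)
  invFun x := ⟨x.1, x.2⟩
  left_inv _ := rfl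
  right_inv _ := rfl
  continuous_toFun := (sdp_inducing φ).continuous
  continuous_invFun := by
    rw [(sdp_inducing φ).continuous_iff]
    exact continuous_id

lemma sdp_continuous_mul [ContinuousMul N] [ContinuousMul H]
    (hact : Continuous fun q : H × N => φ q.1 q.2) :
    Continuous fun q : (N ⋊[φ] H) × (N ⋊[φ] H) => q.1 * q.2 := by
  rw [(sdp_inducing φ).continuous_iff]
  show Continuous fun q : (N ⋊[φ] H) × (N ⋊[φ] H) =>
    ((q.1.left * φ q.1.right q.2.left : N), (q.1.right * q.2.right : H))
  refine Continuous.prodMk ?_ ?_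
  · exact ((sdp_cont_left φ).comp continuous_fst).mul
      (hact.comp (((sdp_cont_right φ).comp continuous_fst).prodMk
        ((sdp_cont_left φ).comp continuous_snd)))
  · exact ((sdp_cont_right φ).comp continuous_fst).mul ((sdp_cont_right φ).comp continuous_snd)

lemma sdp_continuous_inv [ContinuousInv N] [ContinuousInv H]
    (hact : Continuous fun q : H × N => φ q.1 q.2) :
    Continuous fun q : N ⋊[φ] H => q⁻¹ := by
  rw [(sdp_inducing φ).continuous_iff]
  show Continuous fun q : N ⋊[φ] H => ((φ q.right⁻¹ q.left⁻¹ : N), (q.right⁻¹ : H))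
  refine Continuous.prodMk ?_ ?_
  · exact hact.comp (((sdp_cont_right φ).inv).prodMk ((sdp_cont_left φ).inv))
  · exact (sdp_cont_right φ).inv

end SDPaux

section SDPComm

variable {N H : Type*} [CommGroup N] [Group H] (φ : H →* MulAut N)

lemma sdp_conj_inl (x : N ⋊[φ] H) (n : N) : x * inl n * x⁻¹ = inl (φ x.right n) := by
  obtain ⟨a, t⟩ := x
  have hx : (⟨a, t⟩ : N ⋊[φ] H) = inl a * inr t := by ext <;> simp
  have hconj : inr t * inl n * (inr t)⁻¹ = (inl (φ t n) : N ⋊[φ] H) := by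
    rw [← map_inv]
    exact (inl_aut t n).symm
  show (⟨a, t⟩ : N ⋊[φ] H) * inl n * (⟨a, t⟩ : N ⋊[φ] H)⁻¹ = inl (φ t n)
  rw [hx, mul_inv_rev]
  have hre : (inl a * inr t * inl n * ((inr t)⁻¹ * (inl a)⁻¹) : N ⋊[φ] H)
      = inl a * (inr t * inl n * (inr t)⁻¹) * (inl a)⁻¹ := by group
  rw [hre, hconj, ← map_inv, ← map_mul, ← map_mul]
  congr 1
  rw [mul_comm a (φ t n), mul_assoc, mul_inv_cancel, mul_one]

lemma sdp_comm_inl (x : N ⋊[φ] H) (n : N) :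
    ⁅x, inl n⁆ = (inl (φ x.right n * n⁻¹) : N ⋊[φ] H) := by
  rw [commutatorElement_def, sdp_conj_inl φ x n]
  simp only [map_mul, map_inv]

end SDPComm

section Padic

variable {p : ℕ} [hp : Fact p.Prime]

lemma padicInt_scalars {X : Type*} [TopologicalSpace X] {f : ℤ_[p] → X}
    (hf : Continuous f) {A : Set X} (hA : IsClosed A) (h : ∀ n : ℤ, f n ∈ A) :
    ∀ r : ℤ_[p], f r ∈ A := by
  intro r
  have hsub : Set.range (Int.cast : ℤ → ℤ_[p]) ⊆ f ⁻¹' A := by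
    rintro _ ⟨n, rfl⟩; exact h n
  have hc : IsClosed (f ⁻¹' A) := hA.preimage hf
  have hdense : Dense (Set.range (Int.cast : ℤ → ℤ_[p])) := PadicInt.denseRange_intCast
  have : closure (Set.range (Int.cast : ℤ → ℤ_[p])) ⊆ f ⁻¹' A := hc.closure_subset_iff.mpr hsub
  exact this (by rw [hdense.closure_eq]; trivial)

lemma padic_p_pos : (0:ℝ) < (p:ℝ) := by exact_mod_cast hp.out.pos

lemma padic_norm_le_of_dvd {m : ℕ} {x : ℤ_[p]} (h : (p : ℤ_[p]) ^ m ∣ x) :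
    ‖x‖ ≤ (p : ℝ) ^ (-(m : ℤ)) := by
  obtain ⟨c, rfl⟩ := h
  rw [norm_mul, PadicInt.norm_p_pow]
  calc (p:ℝ) ^ (-(m:ℤ)) * ‖c‖ ≤ (p:ℝ) ^ (-(m:ℤ)) * 1 :=
        mul_le_mul_of_nonneg_left (PadicInt.norm_le_one c) (zpow_nonneg padic_p_pos.le _)
    _ = (p:ℝ) ^ (-(m:ℤ)) := mul_one _

lemma padic_dvd_of_norm_le {m : ℕ} {x : ℤ_[p]} (h : ‖x‖ ≤ (p : ℝ) ^ (-(m : ℤ))) :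
    (p : ℤ_[p]) ^ m ∣ x := by
  have := (PadicInt.norm_le_pow_iff_mem_span_pow x m).mp h
  rwa [Ideal.mem_span_singleton] at this

lemma padic_inv_lt_one : ((p:ℝ))⁻¹ < 1 := by
  rw [inv_lt_one_iff₀]; right; exact_mod_cast hp.out.one_lt

lemma beta_continuous {β : ℤ_[p] → ℤ_[p]}
    (hom : ∀ a b : ℤ_[p], β (a + b) = β a * β b) (hd : ∀ t, (p : ℤ_[p]) ∣ β t - 1) :
    Continuous β := by
  have hnorm1 : ∀ t, ‖β t‖ ≤ 1 := fun t => PadicInt.norm_le_one _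
  have hb0 : β 0 = 1 := by
    have h00 : β 0 * β 0 = β 0 := by rw [← hom]; norm_num
    have hne : β 0 ≠ 0 := by
      intro h0
      obtain ⟨c, hc⟩ := hd 0
      rw [h0, zero_sub] at hc
      have h1 : (1:ℝ) = ‖(-1 : ℤ_[p])‖ := by simp
      rw [hc, norm_mul, PadicInt.norm_p] at h1
      have hle : (p:ℝ)⁻¹ * ‖c‖ ≤ (p:ℝ)⁻¹ * 1 :=
        mul_le_mul_of_nonneg_left (PadicInt.norm_le_one c) (by positivity)
      rw [mul_one] at hle
      have := padic_inv_lt_one (p := p)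
      linarith
    exact mul_right_cancel₀ hne (h00.trans (one_mul (β 0)).symm)
  have hpow : ∀ (n : ℕ) (t : ℤ_[p]), β (n • t) = β t ^ n := by
    intro n
    induction n with
    | zero => intro t; simpa using hb0
    | succ k ih => intro t; rw [succ_nsmul, hom, ih, pow_succ]
  have key : ∀ (k : ℕ) (t : ℤ_[p]), (p : ℤ_[p]) ^ (k + 1) ∣ β ((p : ℤ_[p]) ^ k * t) - 1 := by
    intro k t
    have h1 : (p : ℤ_[p]) ^ k * t = (p ^ k : ℕ) • t := by
      rw [nsmul_eq_mul]; push_cast; ring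
    rw [h1, hpow]
    have := dvd_sub_pow_of_dvd_sub (a := β t) (b := 1) (by simpa using hd t) k
    simpa using this
  rw [Metric.continuous_iff]
  intro b ε hε
  obtain ⟨k, hk⟩ : ∃ k : ℕ, ((p : ℝ))⁻¹ ^ k < ε := exists_pow_lt_of_lt_one hε padic_inv_lt_one
  have hp0 : (p:ℝ) ≠ 0 := padic_p_pos.ne'
  refine ⟨(p : ℝ) ^ (-(k : ℤ)) * (p : ℝ)⁻¹, by positivity, ?_⟩
  intro a hab
  rw [dist_eq_norm] at hab
  have hdist : ‖a - b‖ ≤ (p : ℝ) ^ (-(k : ℤ)) := by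
    have h6 : (p : ℝ) ^ (-(k : ℤ)) * (p:ℝ)⁻¹ ≤ (p : ℝ) ^ (-(k : ℤ)) * 1 :=
      mul_le_mul_of_nonneg_left padic_inv_lt_one.le (zpow_nonneg padic_p_pos.le _)
    rw [mul_one] at h6
    exact le_trans hab.le h6
  obtain ⟨t, ht⟩ := padic_dvd_of_norm_le hdist
  have h2 : β a - β b = β b * (β (a - b) - 1) := by
    have h2' : β a = β b * β (a - b) := by rw [← hom]; ring_nf
    rw [h2']; ring
  have h3 : ‖β a - β b‖ ≤ (p : ℝ) ^ (-((k:ℤ) + 1)) := by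
    rw [h2, norm_mul]
    calc ‖β b‖ * ‖β (a-b) - 1‖ ≤ 1 * ‖β (a-b) - 1‖ :=
          mul_le_mul_of_nonneg_right (hnorm1 b) (norm_nonneg _)
      _ = ‖β (a-b) - 1‖ := one_mul _
      _ ≤ (p : ℝ) ^ (-((k:ℤ) + 1)) := by
          have := padic_norm_le_of_dvd (m := k + 1) (x := β (a-b) - 1) (by rw [ht]; exact key k t)
          simpa using this
  rw [dist_eq_norm]
  have h5 : (p:ℝ) ^ (-((k:ℤ)+1)) = ((p:ℝ))⁻¹ ^ k * ((p:ℝ))⁻¹ := by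
    rw [show (-((k:ℤ)+1)) = -(k:ℤ) + (-1) by ring, zpow_add₀ hp0, zpow_neg, zpow_natCast,
      zpow_neg_one, inv_pow]
  calc ‖β a - β b‖ ≤ (p : ℝ) ^ (-((k:ℤ)+1)) := h3
    _ < ε := by
        rw [h5]
        calc ((p:ℝ))⁻¹ ^ k * ((p:ℝ))⁻¹ ≤ ((p:ℝ))⁻¹ ^ k * 1 :=
              mul_le_mul_of_nonneg_left padic_inv_lt_one.le (by positivity)
          _ = ((p:ℝ))⁻¹ ^ k := mul_one _
          _ < ε := hk

end Padic


section ThetaCore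

variable {p : ℕ} [Fact p.Prime] {I : Type*}

/-- Continuity of the action, deduced from the hypothesis on `φ`. -/
lemma theta_act_continuous (i₀ : I) (lam μ : ℤ_[p]) (hμ : lam = p * μ)
    (φ : Multiplicative ℤ_[p] →* MulAut (Multiplicative (I → ℤ_[p])))
    (hφ : ∀ t : ℤ_[p], ∃ m : ℤ_[p], ∀ z, φ (Multiplicative.ofAdd t) z =
        Multiplicative.ofAdd ((1 + lam * m) • Multiplicative.toAdd z)) :
    Continuous fun q : Multiplicative ℤ_[p] × Multiplicative (I → ℤ_[p]) => φ q.1 q.2 := by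
  classical
  set m : ℤ_[p] → ℤ_[p] := fun t => Classical.choose (hφ t) with hm
  have key_φ : ∀ (t : ℤ_[p]) (z : Multiplicative (I → ℤ_[p])),
      φ (ofAdd t) z = ofAdd ((1 + lam * m t) • toAdd z) :=
    fun t => Classical.choose_spec (hφ t)
  set βf : ℤ_[p] → ℤ_[p] := fun t => 1 + lam * m t with hβf
  have e1 : ∀ (t : ℤ_[p]) (w : I → ℤ_[p]), φ (ofAdd t) (ofAdd w) = ofAdd (βf t • w) := by
    intro t w
    rw [key_φ]
    simp
    rfl
  have hβhom : ∀ a b : ℤ_[p], βf (a + b) = βf a * βf b := by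
    intro a b
    have h1 : φ (ofAdd (a + b)) (ofAdd (fun _ => 1 : I → ℤ_[p]))
        = ofAdd (βf (a + b) • (fun _ => 1 : I → ℤ_[p])) := e1 _ _
    have h2 : φ (ofAdd (a + b)) (ofAdd (fun _ => 1 : I → ℤ_[p]))
        = ofAdd ((βf a * βf b) • (fun _ => 1 : I → ℤ_[p])) := by
      rw [ofAdd_add, map_mul, MulAut.mul_apply, e1, e1, smul_smul]
    have h4 : βf (a + b) • (fun _ => 1 : I → ℤ_[p])
        = (βf a * βf b) • (fun _ => 1 : I → ℤ_[p]) :=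
      ofAdd.injective (h1.symm.trans h2)
    have h5 := congrFun h4 i₀
    simpa using h5
  have hβdvd : ∀ t, (p : ℤ_[p]) ∣ βf t - 1 := by
    intro t
    refine ⟨μ * m t, ?_⟩
    rw [hβf]
    simp only [add_sub_cancel_left]
    rw [hμ]; ring
  have hβcont : Continuous βf := beta_continuous hβhom hβdvd
  have heq : (fun q : Multiplicative ℤ_[p] × Multiplicative (I → ℤ_[p]) => φ q.1 q.2)
      = fun q => ofAdd (βf (toAdd q.1) • toAdd q.2) := by
    funext q
    conv_lhs => rw [← ofAdd_toAdd q.1]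
    rw [key_φ]
  rw [heq]
  have hcont2 : Continuous fun q : Multiplicative ℤ_[p] × Multiplicative (I → ℤ_[p]) =>
      (βf (toAdd q.1) • toAdd q.2 : I → ℤ_[p]) := by
    apply continuous_pi
    intro i
    show Continuous fun q : Multiplicative ℤ_[p] × Multiplicative (I → ℤ_[p]) =>
      βf (toAdd q.1) * toAdd q.2 i
    exact (hβcont.comp (continuous_toAdd.comp continuous_fst)).mul
      ((continuous_apply i).comp (continuous_toAdd.comp continuous_snd))
  exact continuous_ofAdd.comp hcont2

/-- The core argument. -/
theorem theta_core (lam μ : ℤ_[p]) (hμ : lam = p * μ)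
    (φ : Multiplicative ℤ_[p] →* MulAut (Multiplicative (I → ℤ_[p])))
    (hφ : ∀ t : ℤ_[p], ∃ m : ℤ_[p], ∀ z, φ (Multiplicative.ofAdd t) z =
        Multiplicative.ofAdd ((1 + lam * m) • Multiplicative.toAdd z))
    (hact : Continuous fun q : Multiplicative ℤ_[p] × Multiplicative (I → ℤ_[p]) =>
      φ q.1 q.2)
    (C : Subgroup (thetaAbelianGroup p I φ))
    (hC : IsClosed (C : Set (thetaAbelianGroup p I φ))) :
    ((⁅C, C⁆ : Subgroup (thetaAbelianGroup p I φ)) : Set (thetaAbelianGroup p I φ)) ⊆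
      closure ((Subgroup.closure
          ((fun x => x ^ p) '' (C : Set (thetaAbelianGroup p I φ))) :
            Subgroup (thetaAbelianGroup p I φ)) : Set (thetaAbelianGroup p I φ)) := by
  classical
  set G' := thetaAbelianGroup p I φ with hG'
  -- the scalar of the action
  set m : ℤ_[p] → ℤ_[p] := fun t => Classical.choose (hφ t) with hm
  have key_φ : ∀ (t : ℤ_[p]) (z : Multiplicative (I → ℤ_[p])),
      φ (ofAdd t) z = ofAdd ((1 + lam * m t) • toAdd z) :=
    fun t => Classical.choose_spec (hφ t)
  haveI : ContinuousMul G' := ⟨sdp_continuous_mul φ hact⟩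
  haveI : ContinuousInv G' := ⟨sdp_continuous_inv φ hact⟩
  haveI : IsTopologicalGroup G' := {}
  haveI : CompactSpace (Multiplicative (I → ℤ_[p])) :=
    inferInstanceAs (CompactSpace (I → ℤ_[p]))
  haveI : CompactSpace (Multiplicative ℤ_[p]) := inferInstanceAs (CompactSpace ℤ_[p])
  haveI : CompactSpace G' := (sdpHomeo φ).symm.compactSpace
  -- the subgroup of `p`-th powers and its closure
  set Q : Subgroup G' := Subgroup.closure ((fun x => x ^ p) '' (C : Set G')) with hQ
  set P : Subgroup G' := Q.topologicalClosure with hP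
  have hQC : Q ≤ C := (Subgroup.closure_le _).mpr (by
    rintro _ ⟨x, hx, rfl⟩
    exact C.pow_mem hx p)
  have hPC : P ≤ C := Subgroup.topologicalClosure_minimal Q hQC hC
  have hPclosed : IsClosed (P : Set G') := isClosed_closure
  have hQP : Q ≤ P := Subgroup.le_topologicalClosure Q
  -- P is normalized by C
  have hconj : ∀ c ∈ C, ∀ x ∈ P, c * x * c⁻¹ ∈ P := by
    intro c hc
    have h1 : ∀ x ∈ Q, c * x * c⁻¹ ∈ Q := by
      intro x hx
      refine Subgroup.closure_induction ?_ ?_ ?_ ?_ hx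
      · rintro _ ⟨y, hy, rfl⟩
        have hcp : c * y ^ p * c⁻¹ = (c * y * c⁻¹) ^ p := by
          simpa [MulAut.conj_apply] using (map_pow (MulAut.conj c) y p).symm
        rw [hcp]
        exact Subgroup.subset_closure ⟨c * y * c⁻¹, C.mul_mem (C.mul_mem hc hy) (C.inv_mem hc), rfl⟩
      · simpa using Q.one_mem
      · intro x y _ _ hx' hy'
        have : c * (x * y) * c⁻¹ = (c * x * c⁻¹) * (c * y * c⁻¹) := by group
        rw [this]; exact Q.mul_mem hx' hy'
      · intro x _ hx'
        have : c * x⁻¹ * c⁻¹ = (c * x * c⁻¹)⁻¹ := by simp [mul_assoc]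
        rw [this]; exact Q.inv_mem hx'
    intro x hx
    have hcont : Continuous fun y : G' => c * y * c⁻¹ :=
      (continuous_mul_right c⁻¹).comp (continuous_mul_left c)
    have hx' : x ∈ closure (Q : Set G') := hx
    have himg : c * x * c⁻¹ ∈ (fun y : G' => c * y * c⁻¹) '' closure (Q : Set G') :=
      ⟨x, hx', rfl⟩
    have hsub : (fun y : G' => c * y * c⁻¹) '' closure (Q : Set G')
        ⊆ closure ((fun y : G' => c * y * c⁻¹) '' (Q : Set G')) :=
      image_closure_subset_closure_image hcont
    have hsub2 : closure ((fun y : G' => c * y * c⁻¹) '' (Q : Set G'))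
        ⊆ closure (Q : Set G') := by
      apply closure_mono
      rintro _ ⟨y, hy, rfl⟩
      exact h1 y hy
    exact hsub2 (hsub himg)
  -- scaling lemma inside P
  have hscale : ∀ w : I → ℤ_[p], (inl (ofAdd w) : G') ∈ P →
      ∀ r : ℤ_[p], (inl (ofAdd (r • w)) : G') ∈ P := by
    intro w hw r
    have hcont : Continuous fun r : ℤ_[p] => (inl (ofAdd (r • w)) : G') := by
      rw [(sdp_inducing φ).continuous_iff]
      show Continuous fun r : ℤ_[p] =>
        ((ofAdd (r • w) : Multiplicative (I → ℤ_[p])), (1 : Multiplicative ℤ_[p]))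
      refine Continuous.prodMk ?_ continuous_const
      apply continuous_ofAdd.comp
      apply continuous_pi
      intro i
      show Continuous fun r : ℤ_[p] => r * w i
      exact continuous_id.mul continuous_const
    refine padicInt_scalars hcont hPclosed ?_ r
    intro n
    have h1 : (inl (ofAdd ((n : ℤ_[p]) • w)) : G') = (inl (ofAdd w) : G') ^ n := by
      rw [← map_zpow]
      congr 1
    rw [h1]
    exact P.zpow_mem hw n
  -- commutators with kernel elements lie in P
  have hcommK : ∀ h ∈ C, ∀ z : Multiplicative (I → ℤ_[p]), (inl z : G') ∈ C →
      ⁅h, (inl z : G')⁆ ∈ P := by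
    intro h hh z hz
    have hzp : (inl z : G') ^ p ∈ P :=
      hQP (Subgroup.subset_closure ⟨inl z, hz, rfl⟩)
    have h1 : (inl z : G') ^ p = inl (ofAdd ((p : ℤ_[p]) • toAdd z)) := by
      rw [← map_pow]
      congr 1
    rw [h1] at hzp
    have h2 := hscale _ hzp (μ * m (toAdd h.right))
    have h3 : (μ * m (toAdd h.right)) • ((p : ℤ_[p]) • toAdd z)
        = (lam * m (toAdd h.right)) • toAdd z := by
      rw [smul_smul]
      congr 1
      rw [hμ]; ring
    rw [h3] at h2
    have h4 : ⁅h, (inl z : G')⁆ = inl (ofAdd ((lam * m (toAdd h.right)) • toAdd z)) := by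
      rw [sdp_comm_inl]
      congr 1
      conv_lhs => rw [← ofAdd_toAdd h.right]
      rw [key_φ]
      rw [← ofAdd_toAdd z, ← ofAdd_neg, ← ofAdd_add]
      · congr 1
        simp only [toAdd_ofAdd]
        rw [add_smul, one_smul]
        abel
    rw [h4]
    exact h2
  -- the projection and its image
  set πc : G' → ℤ_[p] := fun x => toAdd (rightHom x) with hπc
  have hπcont : Continuous πc :=
    continuous_toAdd.comp (sdp_cont_right φ)
  have hCcomp : IsCompact (C : Set G') := hC.isCompact
  set A : Set ℤ_[p] := πc '' (C : Set G') with hA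
  have hAclosed : IsClosed A := (hCcomp.image hπcont).isClosed
  have hAzsmul : ∀ a ∈ A, ∀ n : ℤ, (n : ℤ_[p]) * a ∈ A := by
    rintro _ ⟨x, hx, rfl⟩ n
    refine ⟨x ^ n, C.zpow_mem hx n, ?_⟩
    show toAdd (rightHom (x ^ n)) = (n : ℤ_[p]) * toAdd (rightHom x)
    rw [map_zpow, toAdd_zpow, zsmul_eq_mul]
  have hAsmul : ∀ (r : ℤ_[p]), ∀ a ∈ A, r * a ∈ A := by
    intro r a ha
    exact padicInt_scalars (f := fun s : ℤ_[p] => s * a)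
      (continuous_id.mul continuous_const) hAclosed (fun n => hAzsmul a ha n) r
  set Aid : Ideal ℤ_[p] :=
    { carrier := A
      zero_mem' := ⟨1, C.one_mem, by simp [hπc]⟩
      add_mem' := by
        rintro _ _ ⟨x, hx, rfl⟩ ⟨y, hy, rfl⟩
        refine ⟨x * y, C.mul_mem hx hy, ?_⟩
        show toAdd (rightHom (x * y)) = _
        rw [map_mul, toAdd_mul]
      smul_mem' := fun c x hx => hAsmul c x hx } with hAid
  haveI hprinc : Aid.IsPrincipal := IsPrincipalIdealRing.principal Aid
  set s₀ : ℤ_[p] := Submodule.IsPrincipal.generator Aid with hs₀def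
  have hs₀A : s₀ ∈ A := Submodule.IsPrincipal.generator_mem Aid
  obtain ⟨g, hgC, hgs⟩ := hs₀A
  have hmemA : ∀ h ∈ C, ∃ r : ℤ_[p], πc h = r * s₀ := by
    intro h hh
    have h1 : πc h ∈ Aid := ⟨h, hh, rfl⟩
    rw [← Ideal.span_singleton_generator Aid, Ideal.mem_span_singleton] at h1
    obtain ⟨r, hr⟩ := h1
    exact ⟨r, by rw [hr, mul_comm]⟩
  -- the dense subgroup J
  set K : Subgroup G' := C ⊓ (rightHom : G' →* Multiplicative ℤ_[p]).ker with hK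
  set J : Subgroup G' := Subgroup.closure ((K : Set G') ∪ {g}) with hJ
  have hKC : K ≤ C := inf_le_left
  have hJC : J ≤ C := (Subgroup.closure_le _).mpr (by
    rintro x (hx | rfl)
    · exact hKC hx
    · exact hgC)
  set D : Subgroup G' := J.topologicalClosure with hD
  have hJD : J ≤ D := Subgroup.le_topologicalClosure J
  have hDC : D ≤ C := Subgroup.topologicalClosure_minimal J hJC hC
  have hKJ : K ≤ J := fun x hx => Subgroup.subset_closure (Or.inl hx)
  have hgJ : g ∈ J := Subgroup.subset_closure (Or.inr rfl)
  have hDclosed : IsClosed (D : Set G') := by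
    rw [hD, Subgroup.topologicalClosure_coe]; exact isClosed_closure
  have hDcomp : IsCompact (D : Set G') := hDclosed.isCompact
  have hCD : (C : Set G') ⊆ (D : Set G') := by
    intro h hh
    obtain ⟨r, hr⟩ := hmemA h hh
    have hBclosed : IsClosed (πc '' (D : Set G')) := (hDcomp.image hπcont).isClosed
    have hzmul : ∀ n : ℤ, (fun s : ℤ_[p] => s * s₀) (n : ℤ_[p]) ∈ πc '' (D : Set G') := by
      intro n
      refine ⟨g ^ n, D.zpow_mem (hJD hgJ) n, ?_⟩
      show toAdd (rightHom (g ^ n)) = (n : ℤ_[p]) * s₀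
      have hgn : toAdd (rightHom (g ^ n)) = (n : ℤ_[p]) * toAdd (rightHom g) := by
        rw [map_zpow, toAdd_zpow, zsmul_eq_mul]
      have hgs' : toAdd (rightHom g) = s₀ := hgs
      rw [hgn, hgs']
    have hrs : r * s₀ ∈ πc '' (D : Set G') :=
      padicInt_scalars (f := fun s : ℤ_[p] => s * s₀)
        (continuous_id.mul continuous_const) hBclosed hzmul r
    obtain ⟨d, hdD, hds⟩ := hrs
    have hdC : d ∈ C := hDC hdD
    have hright : rightHom h = rightHom d := by
      apply Multiplicative.toAdd.injective
      have h1 : toAdd (rightHom h) = r * s₀ := hr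
      have h2 : toAdd (rightHom d) = r * s₀ := hds
      rw [h1, h2]
    have hker : h * d⁻¹ ∈ K := by
      refine Subgroup.mem_inf.mpr ⟨C.mul_mem hh (C.inv_mem hdC), ?_⟩
      rw [MonoidHom.mem_ker, map_mul, map_inv, ← hright, mul_inv_cancel]
    have hsplit : h = (h * d⁻¹) * d := (inv_mul_cancel_right h d).symm
    rw [hsplit]
    exact D.mul_mem (hJD (hKJ hker)) hdD
  have hKinl : ∀ k ∈ K, ∃ z : Multiplicative (I → ℤ_[p]), (inl z : G') = k := by
    intro k hk
    have h2 : k ∈ (rightHom : G' →* Multiplicative ℤ_[p]).ker := (Subgroup.mem_inf.mp hk).2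
    rw [← range_inl_eq_ker_rightHom] at h2
    exact h2
  have step0 : ∀ h ∈ C, ∀ k ∈ K, ⁅h, k⁆ ∈ P := by
    intro h hh k hk
    obtain ⟨z, hz⟩ := hKinl k hk
    rw [← hz]
    exact hcommK h hh z (by rw [hz]; exact hKC hk)
  have step0' : ∀ h ∈ C, ∀ k ∈ K, ⁅k, h⁆ ∈ P := by
    intro h hh k hk
    rw [← commutatorElement_inv]
    exact P.inv_mem (step0 h hh k hk)
  have hgg : (⁅g, g⁆ : G') = 1 := by rw [commutatorElement_def]; group
  have step1 : ∀ x ∈ J, x ∈ C ∧ ⁅x, g⁆ ∈ P := by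
    intro x hx
    refine Subgroup.closure_induction (p := fun x _ => x ∈ C ∧ ⁅x, g⁆ ∈ P) ?_ ?_ ?_ ?_ hx
    · rintro y (hy | rfl)
      · exact ⟨hKC hy, step0' g hgC y hy⟩
      · exact ⟨hgC, by rw [hgg]; exact P.one_mem⟩
    · exact ⟨C.one_mem, by rw [commutatorElement_one_left]; exact P.one_mem⟩
    · rintro x y hx' hy' ⟨hxC, hxP⟩ ⟨hyC, hyP⟩
      refine ⟨C.mul_mem hxC hyC, ?_⟩
      have hid : ⁅x * y, g⁆ = (x * ⁅y, g⁆ * x⁻¹) * ⁅x, g⁆ := by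
        simp only [commutatorElement_def]; group
      rw [hid]
      exact P.mul_mem (hconj x hxC _ hyP) hxP
    · rintro x hx' ⟨hxC, hxP⟩
      refine ⟨C.inv_mem hxC, ?_⟩
      have hid : ⁅x⁻¹, g⁆ = x⁻¹ * ⁅x, g⁆⁻¹ * (x⁻¹)⁻¹ := by
        simp only [commutatorElement_def]; simp [mul_assoc]
        exact (congrArg₂ (fun a b : G' => a * b) (inv_inv g) (congrArg₂ (fun a b : G' => a * b) (inv_inv x) rfl)).symm
      rw [hid]
      exact hconj x⁻¹ (C.inv_mem hxC) _ (P.inv_mem hxP)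
  have step2 : ∀ x ∈ J, ∀ y ∈ J, ⁅x, y⁆ ∈ P := by
    intro x hxJ
    obtain ⟨hxC, hxg⟩ := step1 x hxJ
    intro y hyJ
    refine (Subgroup.closure_induction (p := fun y _ => y ∈ C ∧ ⁅x, y⁆ ∈ P)
      ?_ ?_ ?_ ?_ hyJ).2
    · rintro y (hy | rfl)
      · exact ⟨hKC hy, step0 x hxC y hy⟩
      · exact ⟨hgC, hxg⟩
    · exact ⟨C.one_mem, by rw [commutatorElement_one_right]; exact P.one_mem⟩
    · rintro y z hy' hz' ⟨hyC, hyP⟩ ⟨hzC, hzP⟩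
      refine ⟨C.mul_mem hyC hzC, ?_⟩
      have hid : ⁅x, y * z⁆ = ⁅x, y⁆ * (y * ⁅x, z⁆ * y⁻¹) := by
        simp only [commutatorElement_def]; group
      rw [hid]
      exact P.mul_mem hyP (hconj y hyC _ hzP)
    · rintro y hy' ⟨hyC, hyP⟩
      refine ⟨C.inv_mem hyC, ?_⟩
      have hid : ⁅x, y⁻¹⁆ = y⁻¹ * ⁅x, y⁆⁻¹ * (y⁻¹)⁻¹ := by
        simp only [commutatorElement_def]; group
      rw [hid]
      exact hconj y⁻¹ (C.inv_mem hyC) _ (P.inv_mem hyP)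
  have hcommP : ∀ h₁ ∈ C, ∀ h₂ ∈ C, ⁅h₁, h₂⁆ ∈ P := by
    have hcont : Continuous fun q : G' × G' => ⁅q.1, q.2⁆ := by
      simp only [commutatorElement_def]
      exact ((continuous_fst.mul continuous_snd).mul continuous_fst.inv).mul continuous_snd.inv
    have hclosedset : IsClosed ((fun q : G' × G' => ⁅q.1, q.2⁆) ⁻¹' (P : Set G')) :=
      hPclosed.preimage hcont
    intro h₁ h₁C h₂ h₂C
    have h1D : h₁ ∈ closure (J : Set G') := by
      have := hCD h₁C; rwa [hD, Subgroup.topologicalClosure_coe] at this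
    have h2D : h₂ ∈ closure (J : Set G') := by
      have := hCD h₂C; rwa [hD, Subgroup.topologicalClosure_coe] at this
    have hpair : (h₁, h₂) ∈ closure ((J : Set G') ×ˢ (J : Set G')) := by
      rw [closure_prod_eq]; exact ⟨h1D, h2D⟩
    have hsub : ((J : Set G') ×ˢ (J : Set G'))
        ⊆ ((fun q : G' × G' => ⁅q.1, q.2⁆) ⁻¹' (P : Set G')) := by
      rintro ⟨y₁, y₂⟩ ⟨hy₁, hy₂⟩
      exact step2 y₁ hy₁ y₂ hy₂
    have hmem := (closure_minimal hsub hclosedset) hpair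
    rw [Set.mem_preimage] at hmem
    exact SetLike.mem_coe.mp hmem
  have hfinal : ⁅C, C⁆ ≤ P := Subgroup.commutator_le.mpr hcommP
  intro x hx
  have hxP : x ∈ (P : Set G') := hfinal hx
  rw [hP, Subgroup.topologicalClosure_coe] at hxP
  exact hxP

end ThetaCore

/-- Let `p` be an odd prime and `G = ℤ_p ⋉ ℤ_p^I` the semidirect product in which a
fixed topological generator of the `ℤ_p`-factor acts on `ℤ_p^I` by multiplication by
`1 + λ`, `λ ∈ pℤ_p` (so each element acts by a scalar in `1 + λℤ_p`).  Then every
finitely generated closed subgroup `C` of `G` satisfies `[C, C] ⊆ C^p` (the closed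
subgroup generated by `p`-th powers), i.e. `G` is locally powerful. -/
theorem stmt4 (p : ℕ) [Fact p.Prime] (hodd : Odd p) (I : Type*)
    (lam : ℤ_[p]) (hlam : ∃ μ : ℤ_[p], lam = p * μ)
    (φ : Multiplicative ℤ_[p] →* MulAut (Multiplicative (I → ℤ_[p])))
    (hφ1 : ∀ z, φ (Multiplicative.ofAdd 1) z =
        Multiplicative.ofAdd ((1 + lam) • Multiplicative.toAdd z))
    (hφ : ∀ t : ℤ_[p], ∃ m : ℤ_[p], ∀ z, φ (Multiplicative.ofAdd t) z =
        Multiplicative.ofAdd ((1 + lam * m) • Multiplicative.toAdd z)) :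
    ∀ C : Subgroup (thetaAbelianGroup p I φ),
      IsClosed (C : Set (thetaAbelianGroup p I φ)) →
      (∃ S : Finset (thetaAbelianGroup p I φ),
        ↑S ⊆ (C : Set (thetaAbelianGroup p I φ)) ∧
          closure ((Subgroup.closure (S : Set (thetaAbelianGroup p I φ)) :
              Subgroup (thetaAbelianGroup p I φ)) : Set (thetaAbelianGroup p I φ)) =
            (C : Set (thetaAbelianGroup p I φ))) →
      ((⁅C, C⁆ : Subgroup (thetaAbelianGroup p I φ)) : Set (thetaAbelianGroup p I φ)) ⊆
        closure ((Subgroup.closure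
            ((fun x => x ^ p) '' (C : Set (thetaAbelianGroup p I φ))) :
              Subgroup (thetaAbelianGroup p I φ)) : Set (thetaAbelianGroup p I φ)) := by
  classical
  intro C hC _hfg
  by_cases hI : Nonempty I
  case neg =>
    haveI : IsEmpty I := not_nonempty_iff.mp hI
    haveI : Subsingleton (I → ℤ_[p]) := ⟨fun f g => funext fun i => (IsEmpty.elim ‹_› i)⟩
    haveI : Subsingleton (Multiplicative (I → ℤ_[p])) :=
      inferInstanceAs (Subsingleton (I → ℤ_[p]))
    have hcomm : ∀ a b : thetaAbelianGroup p I φ, a * b = b * a := by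
      intro a b
      ext : 1
      · exact Subsingleton.elim _ _
      · exact mul_comm _ _
    intro x hx
    have h1 : x = 1 := by
      have hle : ⁅C, C⁆ ≤ (⊥ : Subgroup (thetaAbelianGroup p I φ)) :=
        Subgroup.commutator_le.mpr (fun g₁ _ g₂ _ => by
          rw [Subgroup.mem_bot, commutatorElement_def, hcomm g₁ g₂]
          group)
      simpa using hle hx
    rw [h1]
    exact subset_closure (Subgroup.one_mem _)
  case pos =>
    obtain ⟨i₀⟩ := hI
    obtain ⟨μ, hμ⟩ := hlam
    exact theta_core lam μ hμ φ hφ (theta_act_continuous i₀ lam μ hμ φ hφ) C hC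
end

section
/- Let p be a prime and F a field of characteristic ≠ p containing a primitive p-th root of unity. Let a, b ∈ F^× have ℤ/p-linearly independent classes in F^×/(F^×)^p, let E = F(a^{1/p}, b^{1/p}) and L = F((F^×)^{1/p}) (the compositum of all F(c^{1/p}), c ∈ F^×). Then for γ ∈ E^×: γ ∈ (L^×)^p if and only if γ ∈ F^×·(E^×)^p. -/
open IntermediateField Polynomial
set_option maxHeartbeats 1000000
set_option synthInstance.maxHeartbeats 400000

lemma key_lemma {F Ω : Type*} [Field F] [Field Ω] [Algebra F Ω]
    (p : ℕ) (hp : p.Prime) (ζ : Ω) (hζ : IsPrimitiveRoot ζ p)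
    (M : IntermediateField F Ω) (hζM : ζ ∈ M)
    (r : Ω) (c : F) (hc : c ≠ 0) (hr : r ^ p = algebraMap F Ω c)
    (δ : Ω) (hδ : δ ∈ M ⊔ IntermediateField.adjoin F {r}) (hδ0 : δ ≠ 0)
    (hδp : δ ^ p ∈ M) :
    ∃ (k : ℕ) (m : Ω), m ∈ M ∧ δ = r ^ k * m := by
  classical
  by_cases hrM : r ∈ M
  · refine ⟨0, δ, ?_, by ring⟩
    have : IntermediateField.adjoin F {r} ≤ M := by
      rw [IntermediateField.adjoin_le_iff]; simpa using hrM
    simpa [sup_eq_left.mpr this] using hδ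
  · -- r ∉ M : degree p extension
    have hrc : r ≠ 0 := by
      intro h; apply hc
      have : (0:Ω) = algebraMap F Ω c := by rw [← hr, h, zero_pow hp.ne_zero]
      exact ((algebraMap F Ω).injective (by simpa using this.symm))
    set cM : ↥M := algebraMap F ↥M c with hcM
    have hcMΩ : (cM : Ω) = algebraMap F Ω c :=
      (IsScalarTower.algebraMap_apply F ↥M Ω c).symm
    have hnoroot : ∀ m : ↥M, m ^ p ≠ cM := by
      intro m hm
      have hm0 : (m:Ω) ≠ 0 := by
        intro h
        apply hc
        have : cM = 0 := by
          have := congrArg (Subtype.val) hm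
          push_cast at this
          apply_fun (Subtype.val) using Subtype.val_injective
          rw [← this, h, zero_pow hp.ne_zero]; rfl
        simpa [hcM, _root_.map_eq_zero] using this
      have hmp : ((m:Ω)) ^ p = r ^ p := by
        have := congrArg (Subtype.val) hm
        push_cast at this
        rw [this, hcMΩ, hr]
      have : (r / (m:Ω)) ^ p = 1 := by
        rw [div_pow, hmp, div_self (pow_ne_zero p hrc)]
      have : NeZero p := ⟨hp.ne_zero⟩
      obtain ⟨i, hi, hieq⟩ := hζ.eq_pow_of_pow_eq_one ‹(r / (m:Ω)) ^ p = 1›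
      have : r = ζ ^ i * (m:Ω) := ((eq_div_iff hm0).mp hieq).symm
      exact hrM (this ▸ mul_mem (pow_mem hζM i) m.2)
    have hirr : Irreducible (X ^ p - C cM) :=
      X_pow_sub_C_irreducible_of_prime hp hnoroot
    have haev : (Polynomial.aeval r) (X ^ p - C cM : Polynomial ↥M) = 0 := by
      have : (Polynomial.aeval r) (X ^ p - C cM : Polynomial ↥M)
          = r ^ p - algebraMap ↥M Ω cM := by simp
      rw [this, hr, ← hcMΩ, sub_eq_zero]; rfl
    have hmonic : (X ^ p - C cM : Polynomial ↥M).Monic :=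
      monic_X_pow_sub_C _ hp.ne_zero
    have hint : IsIntegral ↥M r := ⟨X ^ p - C cM, hmonic, by
      rw [← Polynomial.aeval_def]; exact haev⟩
    have hminp : minpoly ↥M r = X ^ p - C cM :=
      (minpoly.eq_of_irreducible_of_monic hirr haev hmonic).symm
    have hδ' : δ ∈ IntermediateField.adjoin ↥M {r} := by
      rw [← IntermediateField.restrictScalars_adjoin_eq_sup] at hδ
      exact hδ
    set pb := IntermediateField.adjoin.powerBasis hint with hpb
    have hdim : pb.dim = p := by
      simp only [hpb, IntermediateField.adjoin.powerBasis_dim, hminp]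
      exact natDegree_X_pow_sub_C
    set δ' : ↥(IntermediateField.adjoin ↥M {r}) := ⟨δ, hδ'⟩ with hδ'def
    set ζM : ↥M := ⟨ζ, hζM⟩ with hζMdef
    have hζmem : ζ ∈ IntermediateField.adjoin ↥M {r} :=
      IntermediateField.algebraMap_mem _ ζM
    have hrmem : r ∈ IntermediateField.adjoin ↥M {r} :=
      IntermediateField.subset_adjoin _ _ rfl
    set y : ↥(IntermediateField.adjoin ↥M {r}) := ⟨ζ * r, mul_mem hζmem hrmem⟩ with hydef
    have hgen : (pb.gen : Ω) = r := by
      simp [hpb, IntermediateField.adjoin.powerBasis_gen]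
    have hy : (Polynomial.aeval y) (minpoly ↥M pb.gen) = 0 := by
      have h1 : minpoly ↥M pb.gen = minpoly ↥M r := by
        simp only [hpb, IntermediateField.adjoin.powerBasis_gen]
        exact IntermediateField.minpoly_gen ↥M r
      rw [h1, hminp]
      have : (Polynomial.aeval y) (X ^ p - C cM : Polynomial ↥M)
          = y ^ p - algebraMap ↥M _ cM := by simp
      rw [this, sub_eq_zero]
      apply Subtype.ext
      push_cast
      show (ζ * r) ^ p = ((cM : Ω))
      rw [mul_pow, hζ.pow_eq_one, one_mul, hr, hcMΩ]
    set σ := pb.lift y hy with hσdef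
    have hσgen : σ pb.gen = y := pb.lift_gen y hy
    -- σ fixes δ'^p
    have hδ'p : δ' ^ p = algebraMap ↥M _ (⟨δ ^ p, hδp⟩ : ↥M) := by
      apply Subtype.ext; push_cast; rfl
    have hσδp : (σ δ') ^ p = δ' ^ p := by
      rw [← map_pow, hδ'p, AlgHom.commutes]
    have hδ'0 : (δ' : Ω) ≠ 0 := hδ0
    have hu : ((σ δ' : Ω) / δ) ^ p = 1 := by
      have := congrArg (Subtype.val) hσδp
      push_cast at this
      rw [div_pow, this]
      show ((δ':Ω)) ^ p / (δ':Ω) ^ p = 1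
      exact div_self (pow_ne_zero p hδ'0)
    have : NeZero p := ⟨hp.ne_zero⟩
    obtain ⟨k, hk, hkeq⟩ := hζ.eq_pow_of_pow_eq_one hu
    have hσδ : σ δ' = ζM ^ k • δ' := by
      apply Subtype.ext
      have h1 : (σ δ' : Ω) = ζ ^ k * δ := by
        rw [hkeq]; field_simp
      have h2 : ((ζM ^ k • δ' : _) : Ω) = ζ ^ k * δ := by
        rw [Algebra.smul_def, MulMemClass.coe_mul,
          IntermediateField.coe_algebraMap_apply, map_pow]
        norm_cast
      rw [h1, h2]
    -- coordinates
    set f : Fin pb.dim → ↥M := fun i => pb.basis.repr δ' i with hfdef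
    have hrep : ∑ i, f i • pb.basis i = δ' := pb.basis.sum_repr δ'
    have hσsum : σ δ' = ∑ i : Fin pb.dim, (ζM ^ (i : ℕ) * f i) • pb.basis i := by
      rw [← hrep, map_sum]
      refine Finset.sum_congr rfl fun i _ => ?_
      rw [map_smul, pb.basis_eq_pow i, map_pow, hσgen]
      have hy2 : y = ζM • pb.gen := by
        apply Subtype.ext
        show ζ * r = ((ζM : Ω)) * (pb.gen : Ω)
        rw [hgen]
      rw [hy2, _root_.smul_pow, smul_smul, mul_comm]
    have hσsum2 : σ δ' = ∑ i, (ζM ^ k * f i) • pb.basis i := by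
      rw [hσδ, ← hrep, Finset.smul_sum]
      refine Finset.sum_congr rfl fun i _ => ?_
      rw [smul_smul]
    have hcoeff : ∀ i : Fin pb.dim, ζM ^ (i : ℕ) * f i = ζM ^ k * f i := by
      intro i
      have h1 := pb.basis.repr_sum_self (fun i => ζM ^ (i : ℕ) * f i)
      have h2 := pb.basis.repr_sum_self (fun i => ζM ^ k * f i)
      have heq := hσsum.symm.trans hσsum2
      exact funext_iff.mp ((h1.symm.trans (by rw [heq])).trans h2) i
    set k' : Fin pb.dim := ⟨k, hdim ▸ hk⟩ with hk'def
    have hzero : ∀ i : Fin pb.dim, i ≠ k' → f i = 0 := by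
      intro i hik
      by_contra hfi
      have := mul_right_cancel₀ hfi (hcoeff i)
      have hΩ : ζ ^ (i : ℕ) = ζ ^ k := by
        have := congrArg (Subtype.val) this
        push_cast at this
        exact this
      have : (i : ℕ) = k := hζ.pow_inj (hdim ▸ i.2) hk hΩ
      exact hik (Fin.ext this)
    have hfinal : δ' = f k' • pb.basis k' := by
      rw [← hrep]
      rw [Finset.sum_eq_single k']
      · intro i _ hik; rw [hzero i hik, zero_smul]
      · intro h; exact absurd (Finset.mem_univ k') h
    refine ⟨k, (f k' : Ω), (f k').2, ?_⟩
    have := congrArg (Subtype.val) hfinal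
    rw [pb.basis_eq_pow k'] at this
    push_cast at this
    rw [show δ = (δ' : Ω) from rfl, this]
    show (f k' : Ω) * (pb.gen:Ω) ^ (k' : ℕ) = r ^ k * (f k' : Ω)
    rw [hgen, hk'def, mul_comm]


/-- Let `p` be a prime and `F` a field of characteristic `≠ p` containing a primitive
`p`-th root of unity.  Let `a, b ∈ F^×` have `ℤ/p`-linearly independent classes in
`F^×/(F^×)^p`, let `E = F(a^{1/p}, b^{1/p})` and let `L = F((F^×)^{1/p})` be the
compositum of all `F(c^{1/p})`, `c ∈ F^×`, inside an algebraically closed overfield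
`Ω`.  Then for `γ ∈ E^×`:  `γ ∈ (L^×)^p` if and only if `γ ∈ F^×·(E^×)^p`. -/
theorem stmt8 (p : ℕ) (hp : p.Prime) {F Ω : Type*} [Field F] [Field Ω] [Algebra F Ω]
    [IsAlgClosed Ω]
    (hchar : (p : F) ≠ 0) (ζ : F) (hζ : IsPrimitiveRoot ζ p)
    (a b : F) (ha0 : a ≠ 0) (hb0 : b ≠ 0)
    (hindep : ∀ i j : ℕ, (∃ x : F, x ^ p = a ^ i * b ^ j) → p ∣ i ∧ p ∣ j)
    (α β : Ω) (hα : α ^ p = algebraMap F Ω a) (hβ : β ^ p = algebraMap F Ω b)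
    (E : IntermediateField F Ω) (hE : E = IntermediateField.adjoin F {α, β})
    (L : IntermediateField F Ω)
    (hL : L = IntermediateField.adjoin F
        {x : Ω | ∃ c : F, c ≠ 0 ∧ x ^ p = algebraMap F Ω c}) :
    ∀ γ : Ω, γ ∈ E → γ ≠ 0 →
      ((∃ δ ∈ L, δ ^ p = γ) ↔
        ∃ (x : F) (ε : Ω), x ≠ 0 ∧ ε ∈ E ∧ ε ≠ 0 ∧
          γ = algebraMap F Ω x * ε ^ p) := by
  intro γ hγE hγ0
  set ζΩ : Ω := algebraMap F Ω ζ with hζΩdef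
  have hζΩ : IsPrimitiveRoot ζΩ p :=
    hζ.map_of_injective (algebraMap F Ω).injective
  constructor
  · rintro ⟨δ, hδL, hδp⟩
    have hδ0 : δ ≠ 0 := by
      rintro rfl
      exact hγ0 (by rw [← hδp, zero_pow hp.ne_zero])
    rw [hL] at hδL
    obtain ⟨T, hTS, hδT⟩ := IntermediateField.exists_finset_of_mem_adjoin hδL
    have main : ∀ (T : Finset Ω),
        (↑T : Set Ω) ⊆ {x : Ω | ∃ c : F, c ≠ 0 ∧ x ^ p = algebraMap F Ω c} →
        ∀ δ : Ω, δ ∈ E ⊔ IntermediateField.adjoin F (↑T : Set Ω) → δ ≠ 0 → δ ^ p ∈ E →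
        ∃ (x : F) (ε : Ω), x ≠ 0 ∧ ε ∈ E ∧ ε ≠ 0 ∧
          δ ^ p = algebraMap F Ω x * ε ^ p := by
      classical
      intro T
      induction T using Finset.induction_on with
      | empty =>
        intro _ δ hδ hδ0 hδpE
        refine ⟨1, δ, one_ne_zero, ?_, hδ0, by simp⟩
        simpa using hδ
      | @insert r T hrT ih =>
        intro hsub δ hδ hδ0 hδpE
        have hrS : ∃ c : F, c ≠ 0 ∧ r ^ p = algebraMap F Ω c :=
          hsub (Finset.mem_coe.mpr (Finset.mem_insert_self r T))
        have hTS : (↑T : Set Ω) ⊆ _ := fun x hx => hsub (by simp [hx])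
        obtain ⟨c, hc, hrc⟩ := hrS
        set M := E ⊔ IntermediateField.adjoin F (↑T : Set Ω) with hMdef
        have hδM : δ ∈ M ⊔ IntermediateField.adjoin F {r} := by
          have : (↑(insert r T) : Set Ω) = {r} ∪ (↑T : Set Ω) := by
            rw [Finset.coe_insert, Set.insert_eq]
          rw [this, IntermediateField.adjoin_union,
            sup_comm (IntermediateField.adjoin F {r})
              (IntermediateField.adjoin F (↑T : Set Ω)), ← sup_assoc] at hδ
          exact hδ
        have hζM : ζΩ ∈ M := IntermediateField.algebraMap_mem M ζ
        have hδpM : δ ^ p ∈ M := le_sup_left (α := IntermediateField F Ω) hδpE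
        obtain ⟨k, m, hmM, hδeq⟩ :=
          key_lemma p hp ζΩ hζΩ M hζM r c hc hrc δ hδM hδ0 hδpM
        have hm0 : m ≠ 0 := by
          rintro rfl; rw [mul_zero] at hδeq; exact hδ0 hδeq
        have hcΩ0 : algebraMap F Ω (c ^ k) ≠ 0 := by
          simp [pow_ne_zero, hc]
        have hδpeq : δ ^ p = algebraMap F Ω (c ^ k) * m ^ p := by
          rw [hδeq, mul_pow, ← pow_mul, mul_comm k p, pow_mul, hrc, ← map_pow]
        have hcΩ : algebraMap F Ω c ≠ 0 := fun h => hc (by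
          apply (algebraMap F Ω).injective; simp [h])
        have hmpE : m ^ p ∈ E := by
          have : m ^ p = algebraMap F Ω ((c ^ k)⁻¹) * δ ^ p := by
            rw [map_inv₀, hδpeq, map_pow, inv_mul_cancel_left₀ (pow_ne_zero k hcΩ)]
          rw [this]
          exact mul_mem (IntermediateField.algebraMap_mem E _) hδpE
        obtain ⟨x, ε, hx, hεE, hε0, hfact⟩ := ih hTS m hmM hm0 hmpE
        refine ⟨c ^ k * x, ε, mul_ne_zero (pow_ne_zero k hc) hx, hεE, hε0, ?_⟩
        rw [hδpeq, hfact, map_mul, mul_assoc]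
    obtain ⟨x, ε, hx, hεE, hε0, hfact⟩ :=
      main T hTS δ (le_sup_right (α := IntermediateField F Ω) hδT) hδ0 (hδp ▸ hγE)
    exact ⟨x, ε, hx, hεE, hε0, by rw [← hδp, hfact]⟩
  · rintro ⟨x, ε, hx, hεE, hε0, hfact⟩
    obtain ⟨ρ, hρ⟩ := IsAlgClosed.exists_pow_nat_eq (algebraMap F Ω x) hp.pos
    have hEL : E ≤ L := by
      rw [hE, hL]
      apply IntermediateField.adjoin.mono
      rintro z (rfl | rfl)
      exacts [⟨a, ha0, hα⟩, ⟨b, hb0, hβ⟩]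
    refine ⟨ρ * ε, ?_, ?_⟩
    · apply mul_mem
      · rw [hL]
        exact IntermediateField.subset_adjoin _ _ ⟨x, hx, hρ⟩
      · exact hEL hεE
    · rw [mul_pow, hρ, hfact]
end

section
/- Let p be an odd prime and G a pro-p group of the form G = ⟨σ⟩ ⋉ N with ⟨σ⟩ ≅ ℤ_p, N ≅ ℤ_p^I abelian, and σ h σ^{-1} = h^{1+p^k} for all h ∈ N, where k ≥ 1. Then [G, G] = N^{p^k} and γ_i(G) = N^{p^{k(i-1)}} for all i ≥ 2, where γ_i denotes the lower central series. -/
open scoped commutatorElement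


section
variable {N G : Type*} [CommGroup N] [CommGroup G] (φ : G →* MulAut N)

lemma comm_struct (a b : N ⋊[φ] G) :
    ⁅a, b⁆ = SemidirectProduct.inl
      (a.left * φ a.right b.left * (φ b.right a.left)⁻¹ * b.left⁻¹) := by
  ext
  · show (a * b * a⁻¹ * b⁻¹).left = _
    simp [SemidirectProduct.mul_left, SemidirectProduct.inv_left,
      SemidirectProduct.mul_right, SemidirectProduct.inv_right]
    rw [← MulAut.inv_apply, ← map_inv, ← MulAut.mul_apply, ← MulAut.mul_apply, ← map_mul, ← map_mul,
      show a.right * b.right * a.right⁻¹ = b.right by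
        rw [mul_comm a.right b.right, mul_assoc, mul_inv_cancel, mul_one]]
  · show (a * b * a⁻¹ * b⁻¹).right = _
    simp [SemidirectProduct.mul_right, SemidirectProduct.inv_right]
end

section
variable (p k : ℕ) [Fact p.Prime] (I : Type*)
    (φ : Multiplicative ℤ_[p] →* MulAut (Multiplicative (I → ℤ_[p])))
    (hφ : ∀ t : ℤ_[p], ∃ m : ℤ_[p], ∀ z, φ (Multiplicative.ofAdd t) z =
        Multiplicative.ofAdd ((1 + (p : ℤ_[p]) ^ k * m) • Multiplicative.toAdd z))

include hφ in
lemma commC (e : ℕ) (a b : Multiplicative (I → ℤ_[p]) ⋊[φ] Multiplicative ℤ_[p])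
    (hw : ∃ w, Multiplicative.toAdd a.left = (p ^ e : ℕ) • w)
    (hcase : e = 0 ∨ a.right = 1) :
    ∃ u : Multiplicative (I → ℤ_[p]), ⁅a, b⁆ = SemidirectProduct.inl (u ^ p ^ (k + e)) := by
  obtain ⟨m₁, hm₁⟩ := hφ (Multiplicative.toAdd a.right)
  obtain ⟨m₂, hm₂⟩ := hφ (Multiplicative.toAdd b.right)
  obtain ⟨w, hww⟩ := hw
  set A := Multiplicative.toAdd a.left with hA
  set B := Multiplicative.toAdd b.left with hB
  have h1 : φ a.right b.left =
      Multiplicative.ofAdd ((1 + (p : ℤ_[p]) ^ k * m₁) • B) := by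
    rw [← ofAdd_toAdd a.right]; exact hm₁ _
  have h2 : φ b.right a.left =
      Multiplicative.ofAdd ((1 + (p : ℤ_[p]) ^ k * m₂) • A) := by
    rw [← ofAdd_toAdd b.right]; exact hm₂ _
  have hc : Multiplicative.toAdd (a.left * φ a.right b.left * (φ b.right a.left)⁻¹ * b.left⁻¹)
      = ((p : ℤ_[p]) ^ k * m₁) • B - ((p : ℤ_[p]) ^ k * m₂) • A := by
    rw [h1, h2]
    simp only [toAdd_mul, toAdd_inv, toAdd_ofAdd, ← hA, ← hB]
    module
  rcases hcase with he | ha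
  · subst he
    refine ⟨Multiplicative.ofAdd (m₁ • B - m₂ • A), ?_⟩
    rw [comm_struct]
    congr 1
    have key : Multiplicative.toAdd ((Multiplicative.ofAdd (m₁ • B - m₂ • A)) ^ p ^ (k + 0))
        = ((p : ℤ_[p]) ^ k * m₁) • B - ((p : ℤ_[p]) ^ k * m₂) • A := by
      rw [toAdd_pow, toAdd_ofAdd, ← Nat.cast_smul_eq_nsmul ℤ_[p]]
      push_cast
      module
    exact Multiplicative.toAdd.injective (hc.trans key.symm)
  · have hz : ((p : ℤ_[p]) ^ k * m₁) • B = 0 := by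
      have h4 := hm₁ b.left
      rw [ha] at h4
      simp only [toAdd_one, ofAdd_zero, map_one, MulAut.one_apply] at h4
      have h5 := congrArg Multiplicative.toAdd h4
      rw [toAdd_ofAdd, add_smul, one_smul] at h5
      exact (left_eq_add.mp h5)
    refine ⟨Multiplicative.ofAdd (-(m₂ • w)), ?_⟩
    rw [comm_struct]
    congr 1
    have key : Multiplicative.toAdd ((Multiplicative.ofAdd (-(m₂ • w))) ^ p ^ (k + e))
        = ((p : ℤ_[p]) ^ k * m₁) • B - ((p : ℤ_[p]) ^ k * m₂) • A := by
      rw [toAdd_pow, toAdd_ofAdd, hww, ← Nat.cast_smul_eq_nsmul ℤ_[p],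
        ← Nat.cast_smul_eq_nsmul ℤ_[p] (p ^ e) w, hz]
      push_cast
      module
    exact Multiplicative.toAdd.injective (hc.trans key.symm)
end

section
variable (p k : ℕ) [Fact p.Prime] (I : Type*)
    (φ : Multiplicative ℤ_[p] →* MulAut (Multiplicative (I → ℤ_[p])))
    (hφ1 : ∀ z, φ (Multiplicative.ofAdd 1) z =
        Multiplicative.ofAdd ((1 + (p : ℤ_[p]) ^ k) • Multiplicative.toAdd z))

include hφ1 in
lemma commD (H : Subgroup (Multiplicative (I → ℤ_[p]) ⋊[φ] Multiplicative ℤ_[p]))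
    (n : Multiplicative (I → ℤ_[p])) (hn : SemidirectProduct.inl n ∈ H) :
    SemidirectProduct.inl (n ^ p ^ k) ∈ ⁅H, (⊤ : Subgroup (Multiplicative (I → ℤ_[p]) ⋊[φ] Multiplicative ℤ_[p]))⁆ := by
  have hcomm : ⁅(SemidirectProduct.inl n : Multiplicative (I → ℤ_[p]) ⋊[φ] Multiplicative ℤ_[p]),
      (SemidirectProduct.inr (Multiplicative.ofAdd (1 : ℤ_[p])) :
        Multiplicative (I → ℤ_[p]) ⋊[φ] Multiplicative ℤ_[p])⁆
      = SemidirectProduct.inl ((n ^ p ^ k)⁻¹) := by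
    rw [comm_struct]
    congr 1
    rw [SemidirectProduct.left_inl, SemidirectProduct.right_inl, SemidirectProduct.left_inr,
      SemidirectProduct.right_inr, hφ1 n]
    apply Multiplicative.toAdd.injective
    simp only [toAdd_mul, toAdd_inv, toAdd_ofAdd, toAdd_pow, map_one, toAdd_one]
    rw [← Nat.cast_smul_eq_nsmul ℤ_[p]]
    push_cast
    module
  have := Subgroup.commutator_mem_commutator hn (Subgroup.mem_top
    (SemidirectProduct.inr (Multiplicative.ofAdd (1 : ℤ_[p]))))
  rw [hcomm] at this
  have h2 := inv_mem this
  rwa [← map_inv, inv_inv] at h2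
end

lemma closure_pow_eq {M : Type*} [CommGroup M] (n : ℕ) :
    Subgroup.closure ((fun z : M => z ^ n) '' Set.univ) = (powMonoidHom n : M →* M).range := by
  rw [Set.image_univ]
  rw [show Set.range (fun z : M => z ^ n) = ((powMonoidHom n : M →* M).range : Set M) from rfl]
  exact Subgroup.closure_eq _
section
variable (p k : ℕ) [Fact p.Prime] (I : Type*)
    (φ : Multiplicative ℤ_[p] →* MulAut (Multiplicative (I → ℤ_[p])))
    (hφ1 : ∀ z, φ (Multiplicative.ofAdd 1) z =
        Multiplicative.ofAdd ((1 + (p : ℤ_[p]) ^ k) • Multiplicative.toAdd z))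
    (hφ : ∀ t : ℤ_[p], ∃ m : ℤ_[p], ∀ z, φ (Multiplicative.ofAdd t) z =
        Multiplicative.ofAdd ((1 + (p : ℤ_[p]) ^ k * m) • Multiplicative.toAdd z))

include hφ1 hφ in
lemma keyL (j : ℕ) :
    (⊤ : Subgroup (Multiplicative (I → ℤ_[p]) ⋊[φ] Multiplicative ℤ_[p])).lowerCentralSeries (j + 1) =
      Subgroup.map SemidirectProduct.inl
        ((powMonoidHom (p ^ (k * (j + 1))) :
          Multiplicative (I → ℤ_[p]) →* Multiplicative (I → ℤ_[p])).range) := by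
  induction j with
  | zero =>
    rw [Subgroup.lowerCentralSeries_succ, Subgroup.lowerCentralSeries_zero]
    apply le_antisymm
    · refine (Subgroup.closure_le _).mpr ?_
      rintro x ⟨a, -, b, -, rfl⟩
      show ⁅a, b⁆ ∈ _
      obtain ⟨u, hu⟩ := commC p k I φ hφ 0 a b ⟨Multiplicative.toAdd a.left, by simp⟩
        (Or.inl rfl)
      rw [show k + 0 = k * (0 + 1) by ring] at hu
      rw [hu]
      exact Subgroup.mem_map.mpr ⟨u ^ p ^ (k * (0 + 1)), ⟨u, rfl⟩, rfl⟩
    · intro x hx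
      obtain ⟨n, ⟨u, hu⟩, rfl⟩ := Subgroup.mem_map.mp hx
      have := commD p k I φ hφ1 ⊤ u (Subgroup.mem_top _)
      rw [show (powMonoidHom (p ^ (k * (0 + 1)))) u = u ^ p ^ k by
        simp [powMonoidHom_apply]] at hu
      rw [← hu]
      exact this
  | succ j ih =>
    rw [Subgroup.lowerCentralSeries_succ, ih]
    apply le_antisymm
    · refine (Subgroup.closure_le _).mpr ?_
      rintro x ⟨a, ha, b, -, rfl⟩
      show ⁅a, b⁆ ∈ _
      obtain ⟨n, ⟨u, hu⟩, rfl⟩ := Subgroup.mem_map.mp ha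
      obtain ⟨v, hv⟩ := commC p k I φ hφ (k * (j + 1)) (SemidirectProduct.inl n) b
        ⟨Multiplicative.toAdd u, by
          rw [SemidirectProduct.left_inl, ← hu, powMonoidHom_apply, toAdd_pow]⟩
        (Or.inr (SemidirectProduct.right_inl n))
      rw [show k + k * (j + 1) = k * (j + 1 + 1) by ring] at hv
      rw [hv]
      exact Subgroup.mem_map.mpr ⟨v ^ p ^ (k * (j + 1 + 1)), ⟨v, rfl⟩, rfl⟩
    · intro x hx
      obtain ⟨n, ⟨u, hu⟩, rfl⟩ := Subgroup.mem_map.mp hx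
      have hmem : (SemidirectProduct.inl (u ^ p ^ (k * (j + 1))) :
            Multiplicative (I → ℤ_[p]) ⋊[φ] Multiplicative ℤ_[p]) ∈
          Subgroup.map SemidirectProduct.inl
            ((powMonoidHom (p ^ (k * (j + 1))) :
              Multiplicative (I → ℤ_[p]) →* Multiplicative (I → ℤ_[p])).range) :=
        Subgroup.mem_map.mpr ⟨u ^ p ^ (k * (j + 1)), ⟨u, rfl⟩, rfl⟩
      have := commD p k I φ hφ1 _ _ hmem
      rw [← pow_mul, ← pow_add, show k * (j + 1) + k = k * (j + 1 + 1) by ring] at this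
      rw [← hu, powMonoidHom_apply]
      exact this
end

/-- Let `p` be an odd prime, `k ≥ 1`, and `G = ⟨σ⟩ ⋉ N` with `⟨σ⟩ ≅ ℤ_p`,
`N ≅ ℤ_p^I` abelian, and `σ h σ⁻¹ = h^{1+p^k}` for `h ∈ N` (each element of the
`ℤ_p`-factor acting by a scalar in `1 + p^k ℤ_p`).  Then `[G, G] = N^{p^k}` and
`γ_i(G) = N^{p^{k(i-1)}}` for all `i ≥ 2`. -/
theorem stmt11 (p k : ℕ) [Fact p.Prime] (hodd : Odd p) (hk : 1 ≤ k) (I : Type*)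
    (φ : Multiplicative ℤ_[p] →* MulAut (Multiplicative (I → ℤ_[p])))
    (hφ1 : ∀ z, φ (Multiplicative.ofAdd 1) z =
        Multiplicative.ofAdd ((1 + (p : ℤ_[p]) ^ k) • Multiplicative.toAdd z))
    (hφ : ∀ t : ℤ_[p], ∃ m : ℤ_[p], ∀ z, φ (Multiplicative.ofAdd t) z =
        Multiplicative.ofAdd ((1 + (p : ℤ_[p]) ^ k * m) • Multiplicative.toAdd z)) :
    commutator (Multiplicative (I → ℤ_[p]) ⋊[φ] Multiplicative ℤ_[p]) =
      Subgroup.map SemidirectProduct.inl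
        (Subgroup.closure
          ((fun z : Multiplicative (I → ℤ_[p]) => z ^ p ^ k) '' Set.univ)) ∧
    ∀ i : ℕ, 2 ≤ i →
      (⊤ : Subgroup (Multiplicative (I → ℤ_[p]) ⋊[φ] Multiplicative ℤ_[p])).lowerCentralSeries (i - 1) =
        Subgroup.map SemidirectProduct.inl
          (Subgroup.closure
            ((fun z : Multiplicative (I → ℤ_[p]) => z ^ p ^ (k * (i - 1))) '' Set.univ)) := by
  
  constructor
  · rw [closure_pow_eq, ← Subgroup.top_lowerCentralSeries_one, show k = k * (0 + 1) by ring,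
      keyL p k I φ hφ1 hφ 0]
  · intro i hi
    have h1 : i - 1 = (i - 2) + 1 := by omega
    rw [closure_pow_eq, h1, keyL p k I φ hφ1 hφ (i - 2)]
end

section
/- Let p be an odd prime, k ≥ 1, and G = ⟨σ⟩ ⋉ N with ⟨σ⟩ ≅ ℤ_p, N ≅ ℤ_p^I, and σ acting on N by the scalar 1+p^k. Then for every n with p^{ℓ-1} < n ≤ p^ℓ, the n-th dimension subgroup satisfies D_n(G) = G^{p^ℓ}; consequently D_n(G)/D_{n+1}(G) ≅ (ℤ/pℤ)^{I ∪ {*}} if n is a power of p and D_n(G) = D_{n+1}(G) otherwise. -/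
/-- The dimension subgroups of a group `G` (relative to the prime `p`):
`D_1(G) = G` and `D_n(G) = D_{⌈n/p⌉}(G)^p · ∏_{i+j=n} [D_i(G), D_j(G)]`
(for `p ≥ 2` one has `⌈n/p⌉ = (n + p - 1)/p ≤ n - 1` when `n ≥ 2`, which is
recorded by a `min` to make the recursion decreasing). -/
def dimensionSubgroup (p : ℕ) (G : Type*) [Group G] : ℕ → Subgroup G
  | 0 => ⊤
  | 1 => ⊤
  | n + 2 =>
      Subgroup.closure ((fun x => x ^ p) ''
        (dimensionSubgroup p G (min ((n + 2 + p - 1) / p) (n + 1)) : Set G)) ⊔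
      ⨆ i : Fin (n + 1),
        ⁅dimensionSubgroup p G ((i : ℕ) + 1), dimensionSubgroup p G (n + 1 - (i : ℕ))⁆
  termination_by n => n
  decreasing_by
  · omega
  · omega
  · omega


open Finset Multiplicative SemidirectProduct

section Ring
variable {p : ℕ} [hp : Fact p.Prime]

lemma aux_sumdiv (d : ℤ_[p]) (hd : (p:ℤ_[p]) ∣ d - 1) :
    (p:ℤ_[p]) ∣ ∑ i ∈ range p, d ^ i := by
  have h1 : ∑ i ∈ range p, d ^ i - (p:ℤ_[p]) = ∑ i ∈ range p, (d ^ i - 1) := by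
    rw [Finset.sum_sub_distrib]; simp
  have h2 : (p:ℤ_[p]) ∣ ∑ i ∈ range p, (d ^ i - 1) :=
    Finset.dvd_sum fun i _ => hd.trans (by simpa using sub_dvd_pow_sub_pow d 1 i)
  have := dvd_add h2 (dvd_refl (p:ℤ_[p]))
  rwa [← h1, sub_add_cancel] at this

lemma aux_key (u : ℤ_[p]) (hu : (p:ℤ_[p]) ∣ u - 1) :
    ∀ j : ℕ, (u - 1) * (p:ℤ_[p])^j ∣ u ^ (p^j) - 1
  | 0 => by simpa using dvd_refl (u - 1)
  | (j+1) => by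
    have IH := aux_key u hu j
    have hd : (p:ℤ_[p]) ∣ u ^ (p^j) - 1 := hu.trans (by simpa using sub_dvd_pow_sub_pow u 1 (p^j))
    have e : u ^ (p^(j+1)) - 1 = (∑ i ∈ range p, (u^(p^j)) ^ i) * (u^(p^j) - 1) := by
      rw [geom_sum_mul, ← pow_mul, pow_succ]
    rw [e, pow_succ]
    have := mul_dvd_mul (aux_sumdiv _ hd) IH
    calc (u-1) * ((p:ℤ_[p])^j * p) = (p:ℤ_[p]) * ((u-1) * (p:ℤ_[p])^j) := by ring
    _ ∣ (∑ i ∈ range p, (u^(p^j)) ^ i) * ((u^(p^j)) - 1) := this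

lemma aux_geomdiv (c : ℤ_[p]) (hc : (p:ℤ_[p]) ∣ c - 1) (ℓ : ℕ) :
    ((p:ℤ_[p]))^ℓ ∣ ∑ j ∈ range (p^ℓ), c ^ j := by
  rcases eq_or_ne c 1 with rfl | hne
  · simp only [one_pow, Finset.sum_const, card_range, smul_eq_mul, mul_one]
    exact ⟨1, by push_cast; ring⟩
  · obtain ⟨w, hw⟩ := aux_key c hc ℓ
    refine ⟨w, mul_right_cancel₀ (sub_ne_zero.2 hne) ?_⟩
    rw [geom_sum_mul, hw]; ring
end Ring

section Grp
variable {p k : ℕ} [hp : Fact p.Prime] {I : Type*}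
  (φ : Multiplicative ℤ_[p] →* MulAut (Multiplicative (I → ℤ_[p])))

lemma aux_pow_act (A : MulAut (Multiplicative (I → ℤ_[p]))) (c : ℤ_[p])
    (h : ∀ z, A z = ofAdd (c • toAdd z)) (n : ℕ) :
    ∀ z, (A ^ n) z = ofAdd (c ^ n • toAdd z) := by
  induction n with
  | zero => intro z; simp
  | succ n ih =>
    intro z
    rw [pow_succ, MulAut.mul_apply, h z, ih, toAdd_ofAdd, smul_smul, ← pow_succ]

variable (hφ : ∀ t : ℤ_[p], ∃ m : ℤ_[p], ∀ z, φ (Multiplicative.ofAdd t) z =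
        Multiplicative.ofAdd ((1 + (p : ℤ_[p]) ^ k * m) • Multiplicative.toAdd z))

include hφ in
/-- Any `φ r` acts by some scalar. -/
lemma aux_scalar0 (r : Multiplicative ℤ_[p]) :
    ∃ c : ℤ_[p], ∀ z, φ r z = ofAdd (c • toAdd z) := by
  obtain ⟨m, hm⟩ := hφ (toAdd r)
  exact ⟨1 + (p:ℤ_[p])^k * m, by simpa using hm⟩

include hφ in
lemma aux_scalar (hk : 1 ≤ k) (r : Multiplicative ℤ_[p]) (α : ℕ)
    (hr : (p:ℤ_[p])^α ∣ toAdd r) :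
    ∃ c : ℤ_[p], (∀ z, φ r z = ofAdd (c • toAdd z)) ∧ (p:ℤ_[p])^(1+α) ∣ c - 1 := by
  obtain ⟨t₀, ht₀⟩ := hr
  obtain ⟨m, hm⟩ := hφ t₀
  set c₀ : ℤ_[p] := 1 + (p:ℤ_[p])^k * m with hc₀
  have hc₀1 : (p:ℤ_[p]) ∣ c₀ - 1 := by
    refine (dvd_pow_self (p:ℤ_[p]) (by omega : k ≠ 0)).trans ⟨m, by rw [hc₀]; ring⟩
  refine ⟨c₀ ^ (p^α), ?_, ?_⟩
  · have hres : r = (ofAdd t₀) ^ (p^α) := by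
      have h2 : toAdd r = (p^α : ℕ) • t₀ := by
        rw [ht₀, nsmul_eq_mul]; push_cast; ring
      rw [← ofAdd_toAdd r, h2, ofAdd_nsmul]
    rw [hres, map_pow]
    exact aux_pow_act _ c₀ hm (p^α)
  · obtain ⟨w, hw⟩ := aux_key c₀ hc₀1 α
    obtain ⟨v, hv⟩ := hc₀1
    exact ⟨v * w, by rw [hw, hv, pow_add]; ring⟩

/-- The subgroup `S ℓ = p^ℓ N ⋊ p^ℓ ℤ_p`. -/
noncomputable def Sgrp (ℓ : ℕ) :
    Subgroup (Multiplicative (I → ℤ_[p]) ⋊[φ] Multiplicative ℤ_[p]) where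
  carrier := {g | (∀ i, (p:ℤ_[p])^ℓ ∣ toAdd g.left i) ∧ (p:ℤ_[p])^ℓ ∣ toAdd g.right}
  one_mem' := ⟨fun i => by simp, by simp⟩
  mul_mem' := by
    rintro a b ⟨ha1, ha2⟩ ⟨hb1, hb2⟩
    obtain ⟨c, hc⟩ := aux_scalar0 φ hφ a.right
    refine ⟨fun i => ?_, ?_⟩
    · have : (a*b).left = a.left * φ a.right b.left := rfl
      rw [this, toAdd_mul, Pi.add_apply, hc, toAdd_ofAdd, Pi.smul_apply, smul_eq_mul]
      exact dvd_add (ha1 i) ((hb1 i).mul_left c)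
    · have : (a*b).right = a.right * b.right := rfl
      rw [this, toAdd_mul]
      exact dvd_add ha2 hb2
  inv_mem' := by
    rintro a ⟨ha1, ha2⟩
    obtain ⟨c, hc⟩ := aux_scalar0 φ hφ a.right⁻¹
    refine ⟨fun i => ?_, ?_⟩
    · have : (a⁻¹).left = φ a.right⁻¹ a.left⁻¹ := rfl
      rw [this, hc, toAdd_ofAdd, Pi.smul_apply, smul_eq_mul, toAdd_inv, Pi.neg_apply]
      exact ((ha1 i).neg_right).mul_left c
    · have : (a⁻¹).right = a.right⁻¹ := rfl
      rw [this, toAdd_inv]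
      exact ha2.neg_right
end Grp
section Grp2
variable {p k : ℕ} [hp : Fact p.Prime] {I : Type*}
  (φ : Multiplicative ℤ_[p] →* MulAut (Multiplicative (I → ℤ_[p])))
  (hφ : ∀ t : ℤ_[p], ∃ m : ℤ_[p], ∀ z, φ (Multiplicative.ofAdd t) z =
        Multiplicative.ofAdd ((1 + (p : ℤ_[p]) ^ k * m) • Multiplicative.toAdd z))

local notation "G" => Multiplicative (I → ℤ_[p]) ⋊[φ] Multiplicative ℤ_[p]

lemma mem_Sgrp {g : G} {ℓ : ℕ} : g ∈ Sgrp φ hφ ℓ ↔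
    (∀ i, (p:ℤ_[p])^ℓ ∣ toAdd g.left i) ∧ (p:ℤ_[p])^ℓ ∣ toAdd g.right := Iff.rfl

lemma Sgrp_anti {ℓ ℓ' : ℕ} (h : ℓ ≤ ℓ') : Sgrp φ hφ ℓ' ≤ Sgrp φ hφ ℓ := by
  rintro g ⟨h1, h2⟩
  exact ⟨fun i => (pow_dvd_pow _ h).trans (h1 i), (pow_dvd_pow _ h).trans h2⟩

lemma Sgrp_zero : Sgrp φ hφ 0 = ⊤ := by
  ext g; simp [mem_Sgrp]

lemma aux_pow_left (g : G) (c : ℤ_[p]) (hc : ∀ z, φ g.right z = ofAdd (c • toAdd z)) (n : ℕ) :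
    toAdd ((g^n).left) = (∑ j ∈ range n, c^j) • toAdd g.left := by
  induction n with
  | zero => simp
  | succ n ih =>
    have h1 : (g^(n+1)).left = (g^n).left * φ ((g^n).right) g.left := by rw [pow_succ]; rfl
    have h2 : (g^n).right = g.right^n := map_pow (rightHom : _ ⋊[φ] _ →* _) g n
    have h3 : φ ((g^n).right) g.left = ofAdd (c^n • toAdd g.left) := by
      rw [h2, map_pow]
      exact aux_pow_act _ c hc n g.left
    rw [h1, toAdd_mul, ih, h3, toAdd_ofAdd, sum_range_succ, add_smul]

lemma aux_pow_right (g : G) (n : ℕ) : (g^n).right = g.right^n :=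
  map_pow (rightHom : _ ⋊[φ] _ →* _) g n

include hφ in
lemma pow_mem_S (hk : 1 ≤ k) {α : ℕ} {g : G} (hg : g ∈ Sgrp φ hφ α) :
    g ^ p ∈ Sgrp φ hφ (α+1) := by
  obtain ⟨c, hc, hc1⟩ := aux_scalar φ hφ hk g.right 0 (by simpa using dvd_refl _)
  have hcp : (p:ℤ_[p]) ∣ c - 1 := by simpa using hc1
  refine ⟨fun i => ?_, ?_⟩
  · rw [aux_pow_left φ g c (fun z => by rw [← ofAdd_toAdd g.right]; exact hc z) p,
      Pi.smul_apply, smul_eq_mul]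
    rw [pow_succ']
    exact mul_dvd_mul (aux_sumdiv c hcp) (hg.1 i)
  · rw [aux_pow_right φ g p, toAdd_pow, nsmul_eq_mul, pow_succ']
    exact mul_dvd_mul (by norm_num) hg.2

include hφ in
lemma powl_mem_S (hk : 1 ≤ k) (ℓ : ℕ) (g : G) : g ^ (p^ℓ) ∈ Sgrp φ hφ ℓ := by
  obtain ⟨c, hc, hc1⟩ := aux_scalar φ hφ hk g.right 0 (by simpa using dvd_refl _)
  have hcp : (p:ℤ_[p]) ∣ c - 1 := by simpa using hc1
  refine ⟨fun i => ?_, ?_⟩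
  · rw [aux_pow_left φ g c (fun z => by rw [← ofAdd_toAdd g.right]; exact hc z),
      Pi.smul_apply, smul_eq_mul]
    exact (aux_geomdiv c hcp ℓ).mul_right _
  · rw [aux_pow_right φ g, toAdd_pow, nsmul_eq_mul]
    have hcast : ((p^ℓ : ℕ) : ℤ_[p]) = (p:ℤ_[p])^ℓ := by push_cast; ring
    rw [hcast]
    exact dvd_mul_right _ _

lemma aux_inl_pow (x : Multiplicative (I → ℤ_[p])) (n : ℕ) :
    (⟨x, 1⟩ : G)^n = ⟨x^n, 1⟩ := by
  have h : (⟨x, 1⟩ : G) = inl x := rfl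
  rw [h, ← map_pow]; rfl

lemma aux_inr_pow (y : Multiplicative ℤ_[p]) (n : ℕ) :
    (⟨1, y⟩ : G)^n = ⟨1, y^n⟩ := by
  have h : (⟨1, y⟩ : G) = inr y := rfl
  rw [h, ← map_pow]; rfl

lemma aux_S_le (ℓ : ℕ) (K : Subgroup G)
    (hN : ∀ a : I → ℤ_[p], (⟨ofAdd (fun i => (p:ℤ_[p])^ℓ * a i), 1⟩ : G) ∈ K)
    (hT : ∀ t : ℤ_[p], (⟨1, ofAdd ((p:ℤ_[p])^ℓ * t)⟩ : G) ∈ K) :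
    Sgrp φ hφ ℓ ≤ K := by
  rintro g ⟨h1, h2⟩
  choose w hw using h1
  obtain ⟨t₀, ht₀⟩ := h2
  have hg : g = (⟨g.left, 1⟩ : G) * ⟨1, g.right⟩ := by
    apply SemidirectProduct.ext
    · show g.left = g.left * φ 1 1
      simp
    · show g.right = 1 * g.right
      simp
  have e1 : g.left = ofAdd (fun i => (p:ℤ_[p])^ℓ * w i) := by
    rw [← ofAdd_toAdd g.left]
    congr 1
    funext i
    exact hw i
  have e2 : g.right = ofAdd ((p:ℤ_[p])^ℓ * t₀) := by
    rw [← ofAdd_toAdd g.right, ht₀]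
  rw [hg, e1, e2]
  exact K.mul_mem (hN w) (hT t₀)

lemma aux_smul_fun (ℓ : ℕ) (a : I → ℤ_[p]) :
    (fun i => (p:ℤ_[p])^(ℓ+1) * a i) = (p : ℕ) • (fun i => (p:ℤ_[p])^ℓ * a i) := by
  funext i
  rw [Pi.smul_apply, nsmul_eq_mul, pow_succ']
  push_cast
  ring

include hφ in
lemma closure_pow_S (hk : 1 ≤ k) (α : ℕ) :
    Subgroup.closure ((fun x : G => x^p) '' (Sgrp φ hφ α : Set G)) = Sgrp φ hφ (α+1) := by
  apply le_antisymm
  · rw [Subgroup.closure_le]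
    rintro _ ⟨x, hx, rfl⟩
    exact pow_mem_S φ hφ hk hx
  · apply aux_S_le
    · intro a
      apply Subgroup.subset_closure
      refine ⟨⟨ofAdd (fun i => (p:ℤ_[p])^α * a i), 1⟩, ⟨fun i => by simpa using Dvd.intro _ rfl, by simp⟩, ?_⟩
      show (⟨ofAdd fun i => (p:ℤ_[p])^α * a i, 1⟩ : G)^p = _
      rw [aux_inl_pow, ← ofAdd_nsmul, ← aux_smul_fun]
    · intro t
      apply Subgroup.subset_closure
      refine ⟨⟨1, ofAdd ((p:ℤ_[p])^α * t)⟩, ⟨fun i => by simp, by simpa using Dvd.intro _ rfl⟩, ?_⟩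
      show (⟨1, ofAdd ((p:ℤ_[p])^α * t)⟩ : G)^p = _
      rw [aux_inr_pow, ← ofAdd_nsmul, nsmul_eq_mul]
      congr 2
      push_cast
      rw [pow_succ']
      ring

include hφ in
lemma closure_powl (hk : 1 ≤ k) (ℓ : ℕ) :
    Subgroup.closure ((fun x : G => x^(p^ℓ)) '' Set.univ) = Sgrp φ hφ ℓ := by
  apply le_antisymm
  · rw [Subgroup.closure_le]
    rintro _ ⟨x, -, rfl⟩
    exact powl_mem_S φ hφ hk ℓ x
  · apply aux_S_le
    · intro a
      apply Subgroup.subset_closure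
      refine ⟨⟨ofAdd a, 1⟩, Set.mem_univ _, ?_⟩
      show (⟨ofAdd a, 1⟩ : G)^(p^ℓ) = _
      rw [aux_inl_pow, ← ofAdd_nsmul]
      congr 2
      funext i
      rw [Pi.smul_apply, nsmul_eq_mul]
      push_cast
      ring
    · intro t
      apply Subgroup.subset_closure
      refine ⟨⟨1, ofAdd t⟩, Set.mem_univ _, ?_⟩
      show (⟨1, ofAdd t⟩ : G)^(p^ℓ) = _
      rw [aux_inr_pow, ← ofAdd_nsmul, nsmul_eq_mul]
      congr 2
      push_cast
      ring
end Grp2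
section Grp3
variable {p k : ℕ} [hp : Fact p.Prime] {I : Type*}
  (φ : Multiplicative ℤ_[p] →* MulAut (Multiplicative (I → ℤ_[p])))
  (hφ : ∀ t : ℤ_[p], ∃ m : ℤ_[p], ∀ z, φ (Multiplicative.ofAdd t) z =
        Multiplicative.ofAdd ((1 + (p : ℤ_[p]) ^ k * m) • Multiplicative.toAdd z))

local notation "G" => Multiplicative (I → ℤ_[p]) ⋊[φ] Multiplicative ℤ_[p]

open scoped commutatorElement in
include hφ in
lemma comm_mem (hk : 1 ≤ k) {α β : ℕ} {x y : G} (hx : x ∈ Sgrp φ hφ α)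
    (hy : y ∈ Sgrp φ hφ β) : ⁅x, y⁆ ∈ Sgrp φ hφ (α+β+1) := by
  rw [commutatorElement_def]
  obtain ⟨c, hc, hc1⟩ := aux_scalar φ hφ hk x.right α hx.2
  obtain ⟨d, hd, hd1⟩ := aux_scalar φ hφ hk y.right β hy.2
  obtain ⟨c', hc'⟩ := aux_scalar0 φ hφ x.right⁻¹
  obtain ⟨d', hd'⟩ := aux_scalar0 φ hφ y.right⁻¹
  have hxinv : toAdd ((x⁻¹).left) = c' • (-(toAdd x.left)) := by
    show toAdd (φ x.right⁻¹ x.left⁻¹) = _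
    rw [hc', toAdd_ofAdd, toAdd_inv]
  have hyinv : toAdd ((y⁻¹).left) = d' • (-(toAdd y.left)) := by
    show toAdd (φ y.right⁻¹ y.left⁻¹) = _
    rw [hd', toAdd_ofAdd, toAdd_inv]
  have hsc2 : ∀ z, φ ((x*y).right) z = ofAdd ((c*d) • toAdd z) := by
    intro z
    have hr : (x*y).right = x.right * y.right := rfl
    rw [hr, map_mul, MulAut.mul_apply, hd z, hc _, toAdd_ofAdd, smul_smul]
  have hsc3 : ∀ z, φ ((x*y*x⁻¹).right) z = ofAdd (((c*d)*c') • toAdd z) := by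
    intro z
    have hr : (x*y*x⁻¹).right = (x*y).right * x.right⁻¹ := rfl
    rw [hr, map_mul, MulAut.mul_apply, hc' z, hsc2 _, toAdd_ofAdd, smul_smul]
  have e1 : toAdd ((x*y).left) = toAdd x.left + c • toAdd y.left := by
    show toAdd (x.left * φ x.right y.left) = _
    rw [toAdd_mul, hc, toAdd_ofAdd]
  have e2 : toAdd ((x*y*x⁻¹).left)
      = toAdd x.left + c • toAdd y.left + (c*d) • (c' • (-(toAdd x.left))) := by
    show toAdd ((x*y).left * φ ((x*y).right) (x⁻¹).left) = _
    rw [toAdd_mul, e1, hsc2 (x⁻¹).left, toAdd_ofAdd, hxinv]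
  have e3 : toAdd ((x*y*x⁻¹*y⁻¹).left)
      = toAdd x.left + c • toAdd y.left + (c*d) • (c' • (-(toAdd x.left)))
        + ((c*d)*c') • (d' • (-(toAdd y.left))) := by
    show toAdd ((x*y*x⁻¹).left * φ ((x*y*x⁻¹).right) (y⁻¹).left) = _
    rw [toAdd_mul, e2, hsc3 (y⁻¹).left, toAdd_ofAdd, hyinv]
  refine ⟨fun i => ?_, ?_⟩
  · have hONE : ∀ (r : Multiplicative ℤ_[p]) (a b : ℤ_[p]),
        (∀ z, φ r z = ofAdd (a • toAdd z)) → (∀ z, φ r⁻¹ z = ofAdd (b • toAdd z)) →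
        a * b = 1 := by
      intro r a b h1 h2
      have hz : φ r (φ r⁻¹ (ofAdd (fun _ => (1:ℤ_[p])))) = ofAdd (fun _ => (1:ℤ_[p])) := by
        rw [← MulAut.mul_apply, ← map_mul, mul_inv_cancel, map_one, MulAut.one_apply]
      rw [h2, h1] at hz
      have h3 := congrFun (congrArg toAdd hz) i
      simpa using h3
    have hcc : c * c' = 1 := hONE x.right c c' hc hc'
    have hdd : d * d' = 1 := hONE y.right d d' hd hd'
    have hval : toAdd ((x*y*x⁻¹*y⁻¹).left) i
        = (1-d) * toAdd x.left i + (c-1) * toAdd y.left i := by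
      have h4 := congrFun e3 i
      simp only [Pi.add_apply, Pi.smul_apply, Pi.neg_apply, smul_eq_mul] at h4
      rw [h4]
      linear_combination (-(d * toAdd x.left i + toAdd y.left i)) * hcc
        + (-(toAdd y.left i * (c*c'))) * hdd
    rw [hval]
    have d1 : (p:ℤ_[p])^(α+β+1) ∣ (1-d) * toAdd x.left i := by
      have h5 : (p:ℤ_[p])^(1+β) ∣ (1-d) := by
        rw [show (1:ℤ_[p])-d = -(d-1) by ring]
        exact hd1.neg_right
      calc (p:ℤ_[p])^(α+β+1) = (p:ℤ_[p])^(1+β) * (p:ℤ_[p])^α := by rw [← pow_add]; ring_nf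
      _ ∣ (1-d) * toAdd x.left i := mul_dvd_mul h5 (hx.1 i)
    have d2 : (p:ℤ_[p])^(α+β+1) ∣ (c-1) * toAdd y.left i := by
      calc (p:ℤ_[p])^(α+β+1) = (p:ℤ_[p])^(1+α) * (p:ℤ_[p])^β := by rw [← pow_add]; ring_nf
      _ ∣ (c-1) * toAdd y.left i := mul_dvd_mul hc1 (hy.1 i)
    exact dvd_add d1 d2
  · show (p:ℤ_[p])^(α+β+1) ∣ toAdd ((x*y*x⁻¹*y⁻¹).right)
    have hr : (x*y*x⁻¹*y⁻¹).right = x.right*y.right*x.right⁻¹*y.right⁻¹ := rfl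
    have hz : toAdd ((x*y*x⁻¹*y⁻¹).right) = 0 := by
      rw [hr, toAdd_mul, toAdd_mul, toAdd_mul, toAdd_inv, toAdd_inv]
      ring
    rw [hz]
    exact dvd_zero _
end Grp3
section Main
variable {p k : ℕ} [hp : Fact p.Prime] {I : Type*}
  (φ : Multiplicative ℤ_[p] →* MulAut (Multiplicative (I → ℤ_[p])))
  (hφ : ∀ t : ℤ_[p], ∃ m : ℤ_[p], ∀ z, φ (Multiplicative.ofAdd t) z =
        Multiplicative.ofAdd ((1 + (p : ℤ_[p]) ^ k * m) • Multiplicative.toAdd z))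

local notation "G" => Multiplicative (I → ℤ_[p]) ⋊[φ] Multiplicative ℤ_[p]

include hφ in
lemma Dn_eq_S (hk : 1 ≤ k) : ∀ n ℓ : ℕ, 1 ≤ ℓ → p^(ℓ-1) < n → n ≤ p^ℓ →
    dimensionSubgroup p G n = Sgrp φ hφ ℓ := by
  intro n
  induction n using Nat.strong_induction_on with
  | _ n IH =>
  intro ℓ hℓ hlow hhigh
  have hp2 : 2 ≤ p := hp.out.two_le
  have hpow1 : 1 ≤ p^(ℓ-1) := Nat.one_le_pow _ _ (by omega)
  have hn2 : 2 ≤ n := by omega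
  obtain ⟨m, rfl⟩ : ∃ m, n = m + 2 := ⟨n-2, by omega⟩
  have Dval : ∀ j, 1 ≤ j → j < m+2 →
      dimensionSubgroup p G j = Sgrp φ hφ (Nat.clog p j) ∧ j ≤ p^(Nat.clog p j) := by
    intro j hj1 hj2
    rcases eq_or_lt_of_le hj1 with hj | hj
    · subst hj
      constructor
      · rw [Nat.clog_one_right, Sgrp_zero]
        rw [dimensionSubgroup]
      · simp [Nat.clog_one_right]
    · have hc1 : 1 ≤ Nat.clog p j := Nat.clog_pos (by omega) (by omega)
      exact ⟨IH j hj2 (Nat.clog p j) hc1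
          (Nat.pow_pred_clog_lt_self (by omega) (by omega)) (Nat.le_pow_clog (by omega) j),
        Nat.le_pow_clog (by omega) j⟩
  obtain ⟨t, rfl⟩ : ∃ t, ℓ = t + 1 := ⟨ℓ-1, by omega⟩
  simp only [Nat.add_sub_cancel] at hlow
  have hmin : min ((m + 2 + p - 1) / p) (m + 1) = (m+1)/p + 1 := by
    have h1 : m + 2 + p - 1 = m + 1 + p := by omega
    have h2 : (m + 1 + p)/p = (m+1)/p + 1 := Nat.add_div_right _ (by omega)
    have h3 : (m+1)/p ≤ (m+1)/2 := Nat.div_le_div_left (by omega) (by omega)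
    have h4 : (m+1)/2 ≤ m := by omega
    rw [h1, h2]
    omega
  have hq_le : (m+1)/p + 1 ≤ p^t := by
    have hps : p^(t+1) = p^t * p := pow_succ p t
    have h5 : (m+1)/p < p^t := (Nat.div_lt_iff_lt_mul (by omega)).2 (by omega)
    omega
  have hDq : dimensionSubgroup p G ((m+1)/p + 1) = Sgrp φ hφ t := by
    rcases Nat.eq_zero_or_pos t with rfl | ht
    · have h5 : m + 1 < p := by
        have h6 : p^(0+1) = p := by ring
        omega
      have h7 : (m+1)/p = 0 := Nat.div_eq_of_lt h5
      rw [h7, Sgrp_zero]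
      rw [dimensionSubgroup]
    · obtain ⟨s, rfl⟩ : ∃ s, t = s + 1 := ⟨t-1, by omega⟩
      refine IH _ (by omega) (s+1) (by omega) ?_ (by simpa using hq_le)
      have h6 : p^s * p ≤ m + 1 := by
        have hps : p^(s+1) = p^s * p := pow_succ p s
        omega
      have h8 := (Nat.le_div_iff_mul_le (by omega : 0 < p)).2 h6
      simp only [Nat.add_sub_cancel]
      omega
  rw [dimensionSubgroup, hmin, hDq, closure_pow_S φ hφ hk t]
  apply le_antisymm
  · apply sup_le le_rfl
    apply iSup_le
    intro i
    have hi : (i:ℕ) ≤ m := Nat.lt_succ_iff.1 i.2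
    obtain ⟨hD1, hb1⟩ := Dval ((i:ℕ)+1) (by omega) (by omega)
    obtain ⟨hD2, hb2⟩ := Dval (m+1-(i:ℕ)) (by omega) (by omega)
    rw [hD1, hD2]
    set α := Nat.clog p ((i:ℕ)+1)
    set β := Nat.clog p (m+1-(i:ℕ))
    have harith : t + 1 ≤ α + β + 1 := by
      have h8 : p^α ≤ p^(α+β) := Nat.pow_le_pow_right (by omega) (by omega)
      have h9 : p^β ≤ p^(α+β) := Nat.pow_le_pow_right (by omega) (by omega)
      have h10 : p^(α+β) * 2 ≤ p^(α+β) * p := Nat.mul_le_mul_left _ hp2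
      have hps : p^(α+β+1) = p^(α+β) * p := pow_succ p _
      have h11 : p^t < p^(α+β+1) := by omega
      have h12 := (Nat.pow_lt_pow_iff_right (by omega : 1 < p)).1 h11
      omega
    rw [Subgroup.commutator_le]
    intro x hx y hy
    exact Sgrp_anti φ hφ harith (comm_mem φ hφ hk hx hy)
  · exact le_sup_left
end Main
section Quot
variable {p k : ℕ} [hp : Fact p.Prime] {I : Type*}
  (φ : Multiplicative ℤ_[p] →* MulAut (Multiplicative (I → ℤ_[p])))
  (hφ : ∀ t : ℤ_[p], ∃ m : ℤ_[p], ∀ z, φ (Multiplicative.ofAdd t) z =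
        Multiplicative.ofAdd ((1 + (p : ℤ_[p]) ^ k * m) • Multiplicative.toAdd z))

local notation "G" => Multiplicative (I → ℤ_[p]) ⋊[φ] Multiplicative ℤ_[p]

set_option maxHeartbeats 2000000 in
include hφ in
lemma quotient_hom (hk : 1 ≤ k) (m : ℕ) :
    ∃ f : ↥(Sgrp φ hφ m) →* (Option I → Multiplicative (ZMod p)),
      Function.Surjective f ∧
        f.ker = (Sgrp φ hφ (m+1)).subgroupOf (Sgrp φ hφ m) := by
  classical
  have hpm : ((p:ℤ_[p])^m) ≠ 0 := pow_ne_zero _ (by exact_mod_cast hp.out.ne_zero)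
  set ψ : ℤ_[p] → ZMod p := fun x =>
    if h : (p:ℤ_[p])^m ∣ x then PadicInt.toZMod h.choose else 0 with hψdef
  have ψ_spec : ∀ (x w : ℤ_[p]), x = (p:ℤ_[p])^m * w → ψ x = PadicInt.toZMod w := by
    intro x w hw
    have hdvd : (p:ℤ_[p])^m ∣ x := ⟨w, hw⟩
    have hch : hdvd.choose = w := mul_left_cancel₀ hpm (by rw [← hdvd.choose_spec, ← hw])
    show (if h : (p:ℤ_[p])^m ∣ x then PadicInt.toZMod h.choose else 0) = _
    rw [dif_pos hdvd, hch]
  have hp0 : PadicInt.toZMod ((p:ℤ_[p])) = 0 := by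
    have hc : ((p:ℤ_[p])) = ((p:ℕ):ℤ_[p]) := by push_cast; ring
    rw [hc, map_natCast]
    exact ZMod.natCast_self p
  have hζ : ∀ mm : ℤ_[p], PadicInt.toZMod (1 + (p:ℤ_[p])^k * mm) = 1 := by
    intro mm
    rw [map_add, map_one, map_mul, map_pow, hp0, zero_pow (by omega : k ≠ 0),
      zero_mul, add_zero]
  have hker0 : ∀ x : ℤ_[p], PadicInt.toZMod x = 0 ↔ (p:ℤ_[p]) ∣ x := by
    intro x
    have h1 : x ∈ RingHom.ker (PadicInt.toZMod (p:=p)) ↔ PadicInt.toZMod x = 0 :=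
      RingHom.mem_ker
    rw [← h1, PadicInt.ker_toZMod, PadicInt.maximalIdeal_eq_span_p, Ideal.mem_span_singleton]
  refine ⟨{ toFun := (fun g => fun o =>
              ofAdd (o.elim (ψ (toAdd (g:G).right)) (fun i => ψ (toAdd (g:G).left i)))),
            map_one' := ?_, map_mul' := ?_ }, ?_, ?_⟩
  · have h0 : ψ 0 = 0 := by rw [ψ_spec 0 0 (by ring), map_zero]
    funext o
    cases o with
    | none =>
      show ofAdd (ψ (toAdd ((1:G)).right)) = 1
      have : toAdd ((1:G)).right = 0 := rfl
      rw [this, h0, ofAdd_zero]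
    | some i =>
      show ofAdd (ψ (toAdd ((1:G)).left i)) = 1
      have : toAdd ((1:G)).left i = 0 := rfl
      rw [this, h0, ofAdd_zero]
  · intro g h
    funext o
    cases o with
    | none =>
      obtain ⟨wg, hwg⟩ := g.2.2
      obtain ⟨wh, hwh⟩ := h.2.2
      have key : ψ (toAdd (((g:G))*(h:G)).right)
          = ψ (toAdd (g:G).right) + ψ (toAdd (h:G).right) := by
        have hr : (((g:G))*(h:G)).right = (g:G).right*(h:G).right := rfl
        rw [hr, toAdd_mul, ψ_spec _ (wg+wh) (by rw [hwg, hwh]; ring),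
          ψ_spec _ wg hwg, ψ_spec _ wh hwh, map_add]
      show ofAdd (ψ (toAdd (((g:G))*(h:G)).right))
          = ofAdd (ψ (toAdd (g:G).right)) * ofAdd (ψ (toAdd (h:G).right))
      rw [key, ofAdd_add]
    | some i =>
      obtain ⟨mm, hmm⟩ := hφ (toAdd (g:G).right)
      obtain ⟨wg, hwg⟩ := g.2.1 i
      obtain ⟨wh, hwh⟩ := h.2.1 i
      have hl : (((g:G))*(h:G)).left = (g:G).left * φ (g:G).right (h:G).left := rfl
      have hφh : φ (g:G).right (h:G).left
          = ofAdd ((1+(p:ℤ_[p])^k*mm) • toAdd (h:G).left) := by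
        conv_lhs => rw [← ofAdd_toAdd ((g:G).right)]
        exact hmm _
      have hval : toAdd (((g:G))*(h:G)).left i
          = toAdd (g:G).left i + (1+(p:ℤ_[p])^k*mm) * toAdd (h:G).left i := by
        rw [hl, toAdd_mul, Pi.add_apply, hφh, toAdd_ofAdd, Pi.smul_apply, smul_eq_mul]
      have key : ψ (toAdd (((g:G))*(h:G)).left i)
          = ψ (toAdd (g:G).left i) + ψ (toAdd (h:G).left i) := by
        rw [hval, ψ_spec _ (wg + (1+(p:ℤ_[p])^k*mm) * wh) (by rw [hwg, hwh]; ring),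
          ψ_spec _ wg hwg, ψ_spec _ wh hwh, map_add, map_mul, hζ, one_mul]
      show ofAdd (ψ (toAdd (((g:G))*(h:G)).left i))
          = ofAdd (ψ (toAdd (g:G).left i)) * ofAdd (ψ (toAdd (h:G).left i))
      rw [key, ofAdd_add]
  · intro v
    haveI : NeZero p := ⟨hp.out.ne_zero⟩
    have hval : ∀ z : ZMod p, PadicInt.toZMod ((z.val : ℤ_[p])) = z := by
      intro z
      rw [map_natCast]
      exact ZMod.natCast_rightInverse z
    refine ⟨⟨⟨ofAdd (fun i => (p:ℤ_[p])^m * ((toAdd (v (some i))).val : ℤ_[p])),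
      ofAdd ((p:ℤ_[p])^m * ((toAdd (v none)).val : ℤ_[p]))⟩,
      fun i => Dvd.intro _ rfl, Dvd.intro _ rfl⟩, ?_⟩
    funext o
    cases o with
    | none =>
      show ofAdd (ψ ((p:ℤ_[p])^m * ((toAdd (v none)).val : ℤ_[p]))) = v none
      rw [ψ_spec _ _ rfl, hval, ofAdd_toAdd]
    | some i =>
      show ofAdd (ψ ((p:ℤ_[p])^m * ((toAdd (v (some i))).val : ℤ_[p]))) = v (some i)
      rw [ψ_spec _ _ rfl, hval, ofAdd_toAdd]
  · ext g
    simp only [MonoidHom.mem_ker, Subgroup.mem_subgroupOf]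
    constructor
    · intro hg
      constructor
      · intro i
        have h1 := congrFun hg (some i)
        obtain ⟨wg, hwg⟩ := g.2.1 i
        simp only [Pi.one_apply] at h1
        have h2 : ψ (toAdd (g:G).left i) = 0 := by simpa using h1
        rw [ψ_spec _ wg hwg] at h2
        obtain ⟨u, hu⟩ := (hker0 wg).1 h2
        exact ⟨u, by rw [hwg, hu, pow_succ]; ring⟩
      · have h1 := congrFun hg none
        obtain ⟨wg, hwg⟩ := g.2.2
        simp only [Pi.one_apply] at h1
        have h2 : ψ (toAdd (g:G).right) = 0 := by simpa using h1
        rw [ψ_spec _ wg hwg] at h2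
        obtain ⟨u, hu⟩ := (hker0 wg).1 h2
        exact ⟨u, by rw [hwg, hu, pow_succ]; ring⟩
    · intro hg
      funext o
      simp only [Pi.one_apply]
      cases o with
      | some i =>
        obtain ⟨u, hu⟩ := hg.1 i
        show ofAdd (ψ (toAdd (g:G).left i)) = 1
        have h2 : ψ (toAdd (g:G).left i) = 0 := by
          rw [ψ_spec _ ((p:ℤ_[p]) * u) (by rw [hu, pow_succ]; ring), map_mul, hp0, zero_mul]
        rw [h2, ofAdd_zero]
      | none =>
        obtain ⟨u, hu⟩ := hg.2
        show ofAdd (ψ (toAdd (g:G).right)) = 1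
        have h2 : ψ (toAdd (g:G).right) = 0 := by
          rw [ψ_spec _ ((p:ℤ_[p]) * u) (by rw [hu, pow_succ]; ring), map_mul, hp0, zero_mul]
        rw [h2, ofAdd_zero]
end Quot

/-- Let `p` be an odd prime, `k ≥ 1`, and `G = ⟨σ⟩ ⋉ N`, `⟨σ⟩ ≅ ℤ_p`, `N ≅ ℤ_p^I`,
with `σ` acting on `N` by the scalar `1 + p^k` (every element of the `ℤ_p`-factor
acting by a scalar in `1 + p^kℤ_p`).  Then for all `n` with `p^{ℓ-1} < n ≤ p^ℓ` the
dimension subgroup satisfies `D_n(G) = G^{p^ℓ}`; consequently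
`D_n(G)/D_{n+1}(G) ≅ (ℤ/pℤ)^{I ∪ {*}}` when `n` is a power of `p`, and
`D_n(G) = D_{n+1}(G)` otherwise. -/
theorem stmt12 (p k : ℕ) [Fact p.Prime] (hodd : Odd p) (hk : 1 ≤ k) (I : Type*)
    (φ : Multiplicative ℤ_[p] →* MulAut (Multiplicative (I → ℤ_[p])))
    (hφ1 : ∀ z, φ (Multiplicative.ofAdd 1) z =
        Multiplicative.ofAdd ((1 + (p : ℤ_[p]) ^ k) • Multiplicative.toAdd z))
    (hφ : ∀ t : ℤ_[p], ∃ m : ℤ_[p], ∀ z, φ (Multiplicative.ofAdd t) z =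
        Multiplicative.ofAdd ((1 + (p : ℤ_[p]) ^ k * m) • Multiplicative.toAdd z)) :
    (∀ n ℓ : ℕ, 1 ≤ ℓ → p ^ (ℓ - 1) < n → n ≤ p ^ ℓ →
      dimensionSubgroup p (Multiplicative (I → ℤ_[p]) ⋊[φ] Multiplicative ℤ_[p]) n =
        Subgroup.closure
          ((fun x : Multiplicative (I → ℤ_[p]) ⋊[φ] Multiplicative ℤ_[p] =>
              x ^ p ^ ℓ) '' Set.univ)) ∧
    (∀ n : ℕ, 1 ≤ n → (¬ ∃ m : ℕ, n = p ^ m) →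
      dimensionSubgroup p (Multiplicative (I → ℤ_[p]) ⋊[φ] Multiplicative ℤ_[p]) n =
        dimensionSubgroup p (Multiplicative (I → ℤ_[p]) ⋊[φ] Multiplicative ℤ_[p]) (n + 1)) ∧
    (∀ n m : ℕ, n = p ^ m →
      ∃ f : ↥(dimensionSubgroup p
              (Multiplicative (I → ℤ_[p]) ⋊[φ] Multiplicative ℤ_[p]) n) →*
            (Option I → Multiplicative (ZMod p)),
        Function.Surjective f ∧
          f.ker =
            (dimensionSubgroup p
                (Multiplicative (I → ℤ_[p]) ⋊[φ] Multiplicative ℤ_[p]) (n + 1)).subgroupOf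
              (dimensionSubgroup p
                (Multiplicative (I → ℤ_[p]) ⋊[φ] Multiplicative ℤ_[p]) n)) := by
  have hp2 : 2 ≤ p := (Fact.out : p.Prime).two_le
  refine ⟨?_, ?_, ?_⟩
  · intro n ℓ hℓ h1 h2
    rw [Dn_eq_S φ hφ hk n ℓ hℓ h1 h2, ← closure_powl φ hφ hk ℓ]
  · intro n hn1 hnp
    have hn2 : 2 ≤ n := by
      rcases Nat.lt_or_ge n 2 with h | h
      · exact absurd ⟨0, by rw [pow_zero]; omega⟩ hnp
      · exact h
    have hl1 : 1 ≤ Nat.clog p n := Nat.clog_pos (by omega) (by omega)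
    have hlow : p ^ (Nat.clog p n - 1) < n := Nat.pow_pred_clog_lt_self (by omega) (by omega)
    have hhigh : n ≤ p ^ Nat.clog p n := Nat.le_pow_clog (by omega) n
    have hne : n ≠ p ^ Nat.clog p n := fun h => hnp ⟨Nat.clog p n, h⟩
    rw [Dn_eq_S φ hφ hk n (Nat.clog p n) hl1 hlow hhigh,
      Dn_eq_S φ hφ hk (n+1) (Nat.clog p n) hl1 (by omega) (by omega)]
  · intro n m hnm
    subst hnm
    have h1 : 1 ≤ p^m := Nat.one_le_pow _ _ (by omega)
    have hDn : dimensionSubgroup p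
        (Multiplicative (I → ℤ_[p]) ⋊[φ] Multiplicative ℤ_[p]) (p^m) = Sgrp φ hφ m := by
      rcases Nat.eq_zero_or_pos m with rfl | hm
      · rw [pow_zero, Sgrp_zero]
        rw [dimensionSubgroup]
      · exact Dn_eq_S φ hφ hk _ m hm
          ((Nat.pow_lt_pow_iff_right (by omega : 1 < p)).2 (by omega)) le_rfl
    have hDn1 : dimensionSubgroup p
        (Multiplicative (I → ℤ_[p]) ⋊[φ] Multiplicative ℤ_[p]) (p^m+1)
        = Sgrp φ hφ (m+1) := by
      refine Dn_eq_S φ hφ hk _ (m+1) (by omega) ?_ ?_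
      · simp only [Nat.add_sub_cancel]
        omega
      · have hps : p^(m+1) = p^m * p := pow_succ p m
        have hmul : p^m * 2 ≤ p^m * p := Nat.mul_le_mul_left _ hp2
        omega
    rw [hDn, hDn1]
    exact quotient_hom φ hφ hk m
end

section
/- Let p be an odd prime and G = ⟨σ⟩ ⋉ N with ⟨σ⟩ ≅ ℤ_p, N = ℤ_p^I abelian, and σ acting on N by multiplication by 1+p^k with k ≥ 1. Then for every n ≥ 1, the map x ↦ x^{p^n} induces a group isomorphism G/G^p ≅ G^{p^n}/G^{p^{n+1}}. -/
/-- The (normal) subgroup `G^{m}` of a group `G` generated by `m`-th powers. -/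
abbrev powSubgroup (G : Type*) [Group G] (m : ℕ) : Subgroup G :=
  Subgroup.normalClosure ((fun x : G => x ^ m) '' Set.univ)

open Finset



lemma aux_pow {R : Type*} [CommRing R] (c : R) (j : ℕ) :
    ∃ r, (1+c)^j = 1 + j*c + c^2*r := by
  induction j with
  | zero => exact ⟨0, by ring⟩
  | succ j ih =>
    obtain ⟨r, hr⟩ := ih
    refine ⟨r + j + c*r, ?_⟩
    rw [pow_succ, hr]
    push_cast
    ring

lemma aux_geom {R : Type*} [CommRing R] (c : R) (m : ℕ) :
    ∃ r, ∑ j ∈ range m, (1+c)^j = m + (∑ j ∈ range m, (j:R))*c + c^2*r := by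
  induction m with
  | zero => exact ⟨0, by simp⟩
  | succ m ih =>
    obtain ⟨r, hr⟩ := ih
    obtain ⟨r', hr'⟩ := aux_pow c m
    refine ⟨r + r', ?_⟩
    rw [geom_sum_succ', hr, hr', sum_range_succ]
    push_cast
    ring

variable {p : ℕ} [Fact p.Prime]

lemma unitU {v : ℤ_[p]} (hv : (p:ℤ_[p]) ∣ v - 1) : IsUnit v := by
  by_contra h
  have h2 : (p:ℤ_[p]) ∣ v := by
    have h1 : v ∈ IsLocalRing.maximalIdeal ℤ_[p] := h
    rwa [PadicInt.maximalIdeal_eq_span_p, Ideal.mem_span_singleton] at h1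
  have : (p:ℤ_[p]) ∣ 1 := (dvd_sub_right h2).mp (by simpa using hv)
  exact PadicInt.prime_p.not_unit (isUnit_of_dvd_one this)

lemma sum_id_eq (hodd : Odd p) : ∃ σ' : ℕ, ∑ j ∈ range p, j = p * σ' := by
  have h2 : (∑ i ∈ range p, i) * 2 = p * (p-1) := Finset.sum_range_id_mul_two p
  have hp : p ∣ (∑ i ∈ range p, i) * 2 := ⟨p-1, h2⟩
  rcases (Nat.Prime.dvd_mul Fact.out).mp hp with h | h
  · exact h
  · exfalso
    have := (Nat.prime_dvd_prime_iff_eq Fact.out Nat.prime_two).mp h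
    subst this
    simp [Nat.odd_iff] at hodd

lemma lemA (hodd : Odd p) {c : ℤ_[p]} (hc : (p:ℤ_[p]) ∣ c) :
    ∃ v, (∑ j ∈ range p, (1+c)^j = p * v) ∧ (p:ℤ_[p]) ∣ v - 1 := by
  obtain ⟨r, hr⟩ := aux_geom c p
  obtain ⟨σ', hσ⟩ := sum_id_eq hodd
  obtain ⟨c₀, rfl⟩ := hc
  have hcast : (∑ j ∈ range p, (j:ℤ_[p])) = (p:ℤ_[p]) * σ' := by
    have : ((∑ j ∈ range p, j : ℕ) : ℤ_[p]) = ((p * σ' : ℕ) : ℤ_[p]) := by rw [hσ]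
    push_cast at this
    simpa using this
  refine ⟨1 + p * (σ' * c₀ + c₀^2 * r), ?_, ⟨σ' * c₀ + c₀^2 * r, by ring⟩⟩
  rw [hr, hcast]; ring

lemma lemB' {m : ℕ} (hm : 1 ≤ m) {w : ℤ_[p]} (h : (p:ℤ_[p])^m ∣ w - 1) :
    (p:ℤ_[p])^(m+1) ∣ w^p - 1 := by
  obtain ⟨e, he⟩ := h
  obtain ⟨r, hr⟩ := aux_pow ((p:ℤ_[p])^m * e) p
  have hw : w = 1 + (p:ℤ_[p])^m * e := by rw [← he]; ring
  have h1 : w^p - 1 = (p:ℤ_[p]) * ((p:ℤ_[p])^m * e) + ((p:ℤ_[p])^m*e)^2 * r := by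
    rw [hw, hr]; push_cast; ring
  rw [h1]
  refine dvd_add ⟨e, by ring⟩
    (dvd_mul_of_dvd_left (dvd_trans (dvd_trans (pow_dvd_pow _ (by omega : m+1 ≤ 2*m))
      ⟨e^2, by ring⟩) dvd_rfl) r)

lemma lemBs {w : ℤ_[p]} (h : (p:ℤ_[p]) ∣ w - 1) (n : ℕ) :
    (p:ℤ_[p])^(n+1) ∣ w^(p^n) - 1 := by
  induction n with
  | zero => simpa using h
  | succ n ih =>
    have := lemB' (Nat.succ_le_succ (Nat.zero_le n)) ih
    rw [← pow_mul, ← pow_succ] at this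
    exact this

lemma lemB {w : ℤ_[p]} (h : (p:ℤ_[p]) ∣ w - 1) (n : ℕ) :
    (p:ℤ_[p])^n ∣ w^(p^n) - 1 :=
  dvd_trans (pow_dvd_pow _ (Nat.le_succ n)) (lemBs h n)

open Finset Multiplicative

section main
variable {p k : ℕ} [Fact p.Prime] {I : Type*}
  (φ : Multiplicative ℤ_[p] →* MulAut (Multiplicative (I → ℤ_[p])))

local notation "G" => Multiplicative (I → ℤ_[p]) ⋊[φ] Multiplicative ℤ_[p]

-- generic power formula
lemma powP (t : ℤ_[p]) (w : ℤ_[p])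
    (hw : ∀ z, φ (ofAdd t) z = ofAdd (w • toAdd z)) (j : ℕ) (a : I → ℤ_[p]) :
    (⟨ofAdd a, ofAdd t⟩ : G)^j =
      ⟨ofAdd ((∑ i ∈ range j, w^i) • a), ofAdd ((j:ℤ_[p]) * t)⟩ := by
  induction j with
  | zero => simp [SemidirectProduct.ext_iff]
  | succ j ih =>
    rw [pow_succ', ih]
    refine SemidirectProduct.ext ?_ ?_
    · show ofAdd a * φ (ofAdd t) (ofAdd ((∑ i ∈ range j, w^i) • a)) = _
      rw [hw]
      simp only [toAdd_ofAdd, ← ofAdd_add]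
      congr 1
      rw [smul_smul, geom_sum_succ]
      rw [add_smul, one_smul, add_comm]
    · show ofAdd t * ofAdd ((j:ℤ_[p]) * t) = ofAdd (((j+1:ℕ) : ℤ_[p]) * t)
      rw [← ofAdd_add]
      congr 1
      push_cast
      ring

variable (hodd : Odd p) (hk : 1 ≤ k)
  (hφ : ∀ t : ℤ_[p], ∃ m : ℤ_[p], ∀ z, φ (ofAdd t) z =
      ofAdd ((1 + (p : ℤ_[p]) ^ k * m) • toAdd z))

include hφ hk in
-- for every t there is a scalar w ≡ 1 mod p
lemma scalar_exists (t : ℤ_[p]) : ∃ w : ℤ_[p], (p:ℤ_[p]) ∣ w - 1 ∧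
    ∀ z, φ (ofAdd t) z = ofAdd (w • toAdd z) := by
  obtain ⟨m, hm⟩ := hφ t
  refine ⟨1 + (p:ℤ_[p])^k * m, ?_, hm⟩
  have : (p:ℤ_[p]) ∣ (p:ℤ_[p])^k := dvd_pow_self _ (by omega)
  simpa using this.mul_right m

include hφ hk hodd in
-- main power formula
lemma powM (n : ℕ) (t : ℤ_[p]) : ∃ v : ℤ_[p], (p:ℤ_[p]) ∣ v - 1 ∧
    ∀ a : I → ℤ_[p], (⟨ofAdd a, ofAdd t⟩ : G)^(p^n) =
      ⟨ofAdd (((p:ℤ_[p])^n * v) • a), ofAdd ((p:ℤ_[p])^n * t)⟩ := by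
  induction n with
  | zero => exact ⟨1, ⟨0, by ring⟩, fun a => by simp⟩
  | succ n ih =>
    obtain ⟨v, hv, hpow⟩ := ih
    obtain ⟨w, hw1, hw⟩ := scalar_exists φ hk hφ ((p:ℤ_[p])^n * t)
    obtain ⟨c, hc⟩ := hw1
    have hwc : w = 1 + (p:ℤ_[p]) * c := by rw [← hc]; ring
    obtain ⟨v', hA, hv'⟩ := lemA hodd ⟨c, rfl⟩
    refine ⟨v * v', ?_, ?_⟩
    · have : v * v' - 1 = (v - 1) * v' + (v' - 1) := by ring
      rw [this]
      exact dvd_add (hv.mul_right _) hv'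
    · intro a
      rw [pow_succ, pow_mul, hpow a, powP φ _ w hw p _]
      rw [← hwc] at hA
      refine SemidirectProduct.ext ?_ ?_
      · show ofAdd ((∑ i ∈ range p, w^i) • ((p:ℤ_[p])^n * v) • a) = ofAdd (((p:ℤ_[p])^(n+1) * (v*v')) • a)
        rw [hA, smul_smul]
        congr 1
        push_cast
        ring_nf
      · show ofAdd ((p:ℤ_[p]) * ((p:ℤ_[p])^n * t)) = ofAdd ((p:ℤ_[p])^(n+1) * t)
        congr 1
        ring

-- iterate of a scalar automorphism
lemma iter_scalar (ψ : MulAut (Multiplicative (I → ℤ_[p]))) (w : ℤ_[p])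
    (hw : ∀ z, ψ z = ofAdd (w • toAdd z)) (j : ℕ) (z) :
    (ψ^j) z = ofAdd (w^j • toAdd z) := by
  induction j generalizing z with
  | zero => simp
  | succ j ih =>
    rw [pow_succ, MulAut.mul_apply, ih, hw]
    simp [smul_smul, pow_succ, mul_comm]

include hφ hk in
-- scalar for elements divisible by p^n
lemma scalar_high (n : ℕ) {s : ℤ_[p]} (hs : (p:ℤ_[p])^n ∣ s) :
    ∃ W : ℤ_[p], (p:ℤ_[p])^n ∣ W - 1 ∧ ∀ z, φ (ofAdd s) z = ofAdd (W • toAdd z) := by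
  obtain ⟨s', rfl⟩ := hs
  obtain ⟨w, hw1, hw⟩ := scalar_exists φ hk hφ s'
  refine ⟨w^(p^n), lemB hw1 n, fun z => ?_⟩
  have h1 : ofAdd ((p:ℤ_[p])^n * s') = (ofAdd s')^(p^n) := by
    rw [← ofAdd_nsmul]
    congr 1
    push_cast [smul_eq_mul]
    ring
  rw [h1, map_pow]
  exact iter_scalar _ w hw _ z

variable (n : ℕ)

/-- the explicit subgroup -/
noncomputable def Hsub (hk : 1 ≤ k) (hφ : ∀ t : ℤ_[p], ∃ m : ℤ_[p], ∀ z, φ (ofAdd t) z =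
      ofAdd ((1 + (p : ℤ_[p]) ^ k * m) • toAdd z)) (n : ℕ) : Subgroup G where
  carrier := {x | (∀ i, (p:ℤ_[p])^n ∣ toAdd x.left i) ∧ (p:ℤ_[p])^n ∣ toAdd x.right}
  one_mem' := ⟨fun i => by simp, by simp⟩
  mul_mem' := by
    rintro x y ⟨hx1, hx2⟩ ⟨hy1, hy2⟩
    obtain ⟨w, hw1, hw⟩ := scalar_exists φ hk hφ (toAdd x.right)
    constructor
    · intro i
      have h : toAdd (x*y).left i = toAdd x.left i + w * toAdd y.left i := by
        show toAdd (x.left * φ x.right y.left) i = _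
        rw [show φ x.right y.left = ofAdd (w • toAdd y.left) from hw y.left]
        simp
      rw [h]; exact dvd_add (hx1 i) ((hy1 i).mul_left w)
    · show (p:ℤ_[p])^n ∣ toAdd (x.right * y.right)
      rw [toAdd_mul]
      exact dvd_add hx2 hy2
  inv_mem' := by
    rintro x ⟨hx1, hx2⟩
    obtain ⟨w, hw1, hw⟩ := scalar_exists φ hk hφ (toAdd x.right⁻¹)
    constructor
    · intro i
      have h : toAdd (x⁻¹).left i = w * (- toAdd x.left i) := by
        show toAdd (φ x.right⁻¹ x.left⁻¹) i = _
        rw [show φ x.right⁻¹ x.left⁻¹ = ofAdd (w • toAdd x.left⁻¹) from hw x.left⁻¹]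
        simp
      rw [h]
      exact (((hx1 i).neg_right).mul_left w)
    · show (p:ℤ_[p])^n ∣ toAdd (x.right⁻¹)
      rw [toAdd_inv]
      exact hx2.neg_right

lemma mem_Hsub {x : G} :
    x ∈ Hsub φ hk hφ n ↔ (∀ i, (p:ℤ_[p])^n ∣ toAdd x.left i) ∧ (p:ℤ_[p])^n ∣ toAdd x.right :=
  Iff.rfl

include hodd in
lemma Hsub_normal : (Hsub φ hk hφ n).Normal := by
  constructor
  intro x hx g
  rw [mem_Hsub] at hx ⊢
  obtain ⟨hx1, hx2⟩ := hx
  obtain ⟨w, hw1, hw⟩ := scalar_exists φ hk hφ (toAdd g.right)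
  obtain ⟨W, hW1, hW⟩ := scalar_high φ hk hφ n hx2
  have hxr : g.right * x.right * g.right⁻¹ = x.right := by
    rw [mul_comm g.right x.right, mul_assoc]; simp
  have hleft : (g * x * g⁻¹).left =
      g.left * φ g.right x.left * φ x.right g.left⁻¹ := by
    rw [SemidirectProduct.mul_left, SemidirectProduct.mul_left,
      SemidirectProduct.inv_left, SemidirectProduct.mul_right, ← MulAut.mul_apply,
      ← map_mul, mul_assoc, hxr, ← mul_assoc]
  constructor
  · intro i
    have h : toAdd (g * x * g⁻¹).left i =
        toAdd g.left i + w * toAdd x.left i + W * (- toAdd g.left i) := by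
      rw [hleft]
      rw [show φ g.right x.left = ofAdd (w • toAdd x.left) from hw x.left,
        show φ x.right g.left⁻¹ = ofAdd (W • toAdd g.left⁻¹) from hW g.left⁻¹]
      simp
    rw [h]
    have : toAdd g.left i + w * toAdd x.left i + W * (- toAdd g.left i)
        = w * toAdd x.left i + (1 - W) * toAdd g.left i := by ring
    rw [this]
    exact dvd_add ((hx1 i).mul_left w) ((by simpa using hW1.neg_right : (p:ℤ_[p])^n ∣ 1 - W).mul_right _)
  · have h : toAdd (g * x * g⁻¹).right = toAdd x.right := by
      rw [SemidirectProduct.mul_right, SemidirectProduct.mul_right,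
        SemidirectProduct.inv_right, hxr]
    rw [h]; exact hx2

include hodd hk hφ in
lemma powM' (x : G) : ∃ v : ℤ_[p], (p:ℤ_[p]) ∣ v - 1 ∧
    x^(p^n) = ⟨ofAdd (((p:ℤ_[p])^n * v) • toAdd x.left), ofAdd ((p:ℤ_[p])^n * toAdd x.right)⟩ := by
  obtain ⟨l, r⟩ := x
  obtain ⟨v, hv, hpow⟩ := powM φ hodd hk hφ n (toAdd r)
  exact ⟨v, hv, hpow (toAdd l)⟩

include hodd hk hφ in
-- every element of Hsub is a p^n-th power
lemma Hsub_surj {x : G} (hx : x ∈ Hsub φ hk hφ n) : ∃ y : G, y^(p^n) = x := by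
  rw [mem_Hsub] at hx
  obtain ⟨hx1, hx2⟩ := hx
  obtain ⟨t, ht⟩ := hx2
  set b' : I → ℤ_[p] := fun i => (hx1 i).choose with hb'
  have hb : ∀ i, toAdd x.left i = (p:ℤ_[p])^n * b' i := fun i => (hx1 i).choose_spec
  obtain ⟨v, hv, hpow⟩ := powM φ hodd hk hφ n t
  have hu : IsUnit v := unitU hv
  set a : I → ℤ_[p] := fun i => ↑hu.unit⁻¹ * b' i with ha
  refine ⟨⟨ofAdd a, ofAdd t⟩, ?_⟩
  rw [hpow a]
  obtain ⟨l, r⟩ := x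
  refine SemidirectProduct.ext ?_ ?_
  · show ofAdd (((p:ℤ_[p])^n * v) • a) = l
    have : ((p:ℤ_[p])^n * v) • a = toAdd l := by
      funext i
      have h1 : (v : ℤ_[p]) * ↑hu.unit⁻¹ = 1 := hu.mul_val_inv
      show ((p:ℤ_[p])^n * v) * (↑hu.unit⁻¹ * b' i) = toAdd l i
      rw [hb i]
      rw [show ((p:ℤ_[p])^n * v) * (↑hu.unit⁻¹ * b' i) = (p:ℤ_[p])^n * ((v * ↑hu.unit⁻¹) * b' i) by ring, h1, one_mul]
    rw [this]
    rfl
  · show ofAdd ((p:ℤ_[p])^n * t) = r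
    rw [← ht]
    rfl

include hodd hk hφ in
lemma Hsub_eq : powSubgroup G (p^n) = Hsub φ hk hφ n := by
  have := Hsub_normal φ hodd hk hφ n
  apply le_antisymm
  · apply Subgroup.normalClosure_le_normal
    rintro _ ⟨x, -, rfl⟩
    obtain ⟨v, hv, hpow⟩ := powM' φ hodd hk hφ n x
    show x ^ p^n ∈ Hsub φ hk hφ n
    rw [mem_Hsub, hpow]
    constructor
    · intro i
      exact ⟨v * toAdd x.left i, by simp [mul_assoc]⟩
    · exact ⟨toAdd x.right, rfl⟩
  · intro x hx
    obtain ⟨y, hy⟩ := Hsub_surj φ hodd hk hφ n hx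
    exact Subgroup.subset_normalClosure ⟨y, Set.mem_univ y, hy⟩

include hk in
-- difference criterion
lemma quot_crit {z w : G} :
    z⁻¹ * w ∈ Hsub φ hk hφ n ↔
      (∀ i, (p:ℤ_[p])^n ∣ (toAdd w.left i - toAdd z.left i)) ∧
        (p:ℤ_[p])^n ∣ (toAdd w.right - toAdd z.right) := by
  obtain ⟨W, hW1, hW⟩ := scalar_exists φ hk hφ (toAdd z.right⁻¹)
  have hWu : IsUnit W := unitU hW1
  have hleft : (z⁻¹ * w).left = φ z.right⁻¹ (z.left⁻¹ * w.left) := by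
    rw [SemidirectProduct.mul_left, SemidirectProduct.inv_left,
      SemidirectProduct.inv_right, map_mul]
  have hl : ∀ i, toAdd (z⁻¹ * w).left i = W * (toAdd w.left i - toAdd z.left i) := by
    intro i
    rw [hleft, show φ z.right⁻¹ (z.left⁻¹ * w.left) = ofAdd (W • toAdd (z.left⁻¹ * w.left)) from hW _]
    simp
    ring
  have hr : toAdd (z⁻¹ * w).right = toAdd w.right - toAdd z.right := by
    rw [SemidirectProduct.mul_right, SemidirectProduct.inv_right]
    simp
    ring
  rw [mem_Hsub]
  constructor
  · rintro ⟨h1, h2⟩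
    refine ⟨fun i => ?_, by rwa [hr] at h2⟩
    have := h1 i
    rwa [hl i, hWu.dvd_mul_left] at this
  · rintro ⟨h1, h2⟩
    refine ⟨fun i => ?_, by rwa [hr]⟩
    rw [hl i, hWu.dvd_mul_left]
    exact h1 i

include hk hφ in
lemma mul_comps (x y : G) : ∃ w : ℤ_[p], (p:ℤ_[p]) ∣ w - 1 ∧
    (∀ i, toAdd (x*y).left i = toAdd x.left i + w * toAdd y.left i) ∧
    toAdd (x*y).right = toAdd x.right + toAdd y.right := by
  obtain ⟨w, hw1, hw⟩ := scalar_exists φ hk hφ (toAdd x.right)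
  refine ⟨w, hw1, fun i => ?_, ?_⟩
  · show toAdd (x.left * φ x.right y.left) i = _
    rw [show φ x.right y.left = ofAdd (w • toAdd y.left) from hw _]
    simp
  · show toAdd (x.right * y.right) = _
    rw [toAdd_mul]

end main



set_option maxHeartbeats 2000000 in
/-- Let `p` be an odd prime and `G = ⟨σ⟩ ⋉ N`, `⟨σ⟩ ≅ ℤ_p`, `N = ℤ_p^I` abelian, with
`σ` acting on `N` by multiplication by `1 + p^k`, `k ≥ 1` (each element of the
`ℤ_p`-factor acting by a scalar in `1 + p^kℤ_p`).  Then for every `n ≥ 1` the map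
`x ↦ x^{p^n}` induces a group isomorphism `G/G^p ≅ G^{p^n}/G^{p^{n+1}}`. -/
theorem stmt17 (p k : ℕ) [Fact p.Prime] (hodd : Odd p) (hk : 1 ≤ k) (I : Type*)
    (φ : Multiplicative ℤ_[p] →* MulAut (Multiplicative (I → ℤ_[p])))
    (hφ1 : ∀ z, φ (Multiplicative.ofAdd 1) z =
        Multiplicative.ofAdd ((1 + (p : ℤ_[p]) ^ k) • Multiplicative.toAdd z))
    (hφ : ∀ t : ℤ_[p], ∃ m : ℤ_[p], ∀ z, φ (Multiplicative.ofAdd t) z =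
        Multiplicative.ofAdd ((1 + (p : ℤ_[p]) ^ k * m) • Multiplicative.toAdd z)) :
    ∀ n : ℕ, 1 ≤ n →
      ∃ e : (Multiplicative (I → ℤ_[p]) ⋊[φ] Multiplicative ℤ_[p]) ⧸
              powSubgroup (Multiplicative (I → ℤ_[p]) ⋊[φ] Multiplicative ℤ_[p]) p ≃*
            ↥(powSubgroup (Multiplicative (I → ℤ_[p]) ⋊[φ] Multiplicative ℤ_[p]) (p ^ n)) ⧸
              (powSubgroup (Multiplicative (I → ℤ_[p]) ⋊[φ] Multiplicative ℤ_[p])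
                  (p ^ (n + 1))).subgroupOf
                (powSubgroup (Multiplicative (I → ℤ_[p]) ⋊[φ] Multiplicative ℤ_[p]) (p ^ n)),
        ∀ x : Multiplicative (I → ℤ_[p]) ⋊[φ] Multiplicative ℤ_[p],
          e (QuotientGroup.mk x) =
            QuotientGroup.mk
              ⟨x ^ p ^ n,
                Subgroup.subset_normalClosure
                  (Set.mem_image_of_mem _ (Set.mem_univ x))⟩ := by

  intro n hn
  classical
  have hmem : ∀ x : Multiplicative (I → ℤ_[p]) ⋊[φ] Multiplicative ℤ_[p],
      x ^ p ^ n ∈ powSubgroup (Multiplicative (I → ℤ_[p]) ⋊[φ] Multiplicative ℤ_[p]) (p ^ n) :=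
    fun x => Subgroup.subset_normalClosure (Set.mem_image_of_mem _ (Set.mem_univ x))
  have eq1 : powSubgroup (Multiplicative (I → ℤ_[p]) ⋊[φ] Multiplicative ℤ_[p]) p
      = Hsub φ hk hφ 1 := by
    have h := Hsub_eq φ hodd hk hφ 1
    rwa [pow_one] at h
  have eqn := Hsub_eq φ hodd hk hφ n
  have eqn1 := Hsub_eq φ hodd hk hφ (n+1)
  have hpne : (p:ℤ_[p])^n ≠ 0 :=
    pow_ne_zero _ (Nat.cast_ne_zero.mpr (Fact.out : p.Prime).ne_zero)
  have hcancel : ∀ c : ℤ_[p], ((p:ℤ_[p])^(n+1) ∣ (p:ℤ_[p])^n * c) ↔ (p:ℤ_[p]) ∣ c := fun c => by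
    rw [pow_succ, mul_dvd_mul_iff_left hpne]
  have hmul1 : ∀ u v : ℤ_[p], (p:ℤ_[p]) ∣ u - 1 → (p:ℤ_[p]) ∣ v - 1 →
      (p:ℤ_[p]) ∣ u*v - 1 := by
    intro u v hu hv
    have h : u*v - 1 = (u-1)*v + (v-1) := by ring
    rw [h]; exact dvd_add (hu.mul_right _) hv
  have hmul : ∀ x y : Multiplicative (I → ℤ_[p]) ⋊[φ] Multiplicative ℤ_[p],
      (QuotientGroup.mk ⟨(x*y) ^ p ^ n, hmem (x*y)⟩ :
        ↥(powSubgroup (Multiplicative (I → ℤ_[p]) ⋊[φ] Multiplicative ℤ_[p]) (p ^ n)) ⧸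
          (powSubgroup (Multiplicative (I → ℤ_[p]) ⋊[φ] Multiplicative ℤ_[p])
              (p ^ (n + 1))).subgroupOf
            (powSubgroup (Multiplicative (I → ℤ_[p]) ⋊[φ] Multiplicative ℤ_[p]) (p ^ n)))
      = QuotientGroup.mk ⟨x ^ p ^ n, hmem x⟩ * QuotientGroup.mk ⟨y ^ p ^ n, hmem y⟩ := by
    intro x y
    rw [← QuotientGroup.mk_mul]
    apply QuotientGroup.eq.mpr
    rw [Subgroup.mem_subgroupOf]
    simp only [Subgroup.coe_mul, InvMemClass.coe_inv]
    rw [eqn1]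
    obtain ⟨v₁, hv₁, h1⟩ := powM' φ hodd hk hφ n (x*y)
    obtain ⟨v₂, hv₂, h2⟩ := powM' φ hodd hk hφ n x
    obtain ⟨v₃, hv₃, h3⟩ := powM' φ hodd hk hφ n y
    obtain ⟨wt, hwt, hwl, hwr⟩ := mul_comps φ hk hφ x y
    obtain ⟨w4, hw4, h4l, h4r⟩ := mul_comps φ hk hφ (x ^ p ^ n) (y ^ p ^ n)
    refine (quot_crit φ hk hφ (n+1)).mpr ⟨fun i => ?_, ?_⟩
    · rw [h4l i, h2, h3, h1]
      dsimp only
      simp only [toAdd_ofAdd, Pi.smul_apply, smul_eq_mul]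
      rw [hwl i]
      rw [show (p:ℤ_[p])^n*v₂ * toAdd x.left i + w4 * ((p:ℤ_[p])^n*v₃ * toAdd y.left i)
            - (p:ℤ_[p])^n*v₁ * (toAdd x.left i + wt * toAdd y.left i)
          = (p:ℤ_[p])^n * ((v₂ - v₁) * toAdd x.left i
              + (w4*v₃ - v₁*wt) * toAdd y.left i) from by ring, hcancel]
      have h5 : (p:ℤ_[p]) ∣ v₂ - v₁ := by
        have h := dvd_sub hv₂ hv₁
        rwa [sub_sub_sub_cancel_right] at h
      have h6 : (p:ℤ_[p]) ∣ w4*v₃ - v₁*wt := by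
        have h := dvd_sub (hmul1 _ _ hw4 hv₃) (hmul1 _ _ hv₁ hwt)
        rwa [sub_sub_sub_cancel_right] at h
      exact dvd_add (h5.mul_right _) (h6.mul_right _)
    · rw [h4r, h2, h3, h1]
      dsimp only
      simp only [toAdd_ofAdd]
      rw [hwr]
      rw [show (p:ℤ_[p])^n * toAdd x.right + (p:ℤ_[p])^n * toAdd y.right
            - (p:ℤ_[p])^n * (toAdd x.right + toAdd y.right) = 0 from by ring]
      exact dvd_zero _
  have hker : ∀ x ∈ powSubgroup (Multiplicative (I → ℤ_[p]) ⋊[φ] Multiplicative ℤ_[p]) p,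
      (QuotientGroup.mk ⟨x ^ p ^ n, hmem x⟩ :
        ↥(powSubgroup (Multiplicative (I → ℤ_[p]) ⋊[φ] Multiplicative ℤ_[p]) (p ^ n)) ⧸
          (powSubgroup (Multiplicative (I → ℤ_[p]) ⋊[φ] Multiplicative ℤ_[p])
              (p ^ (n + 1))).subgroupOf
            (powSubgroup (Multiplicative (I → ℤ_[p]) ⋊[φ] Multiplicative ℤ_[p]) (p ^ n)))
      = 1 := by
    intro x hx
    rw [eq1, mem_Hsub] at hx
    simp only [pow_one] at hx
    rw [QuotientGroup.eq_one_iff, Subgroup.mem_subgroupOf]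
    show x ^ p ^ n ∈ _
    rw [eqn1]
    obtain ⟨v, hv, h⟩ := powM' φ hodd hk hφ n x
    rw [h, mem_Hsub]
    dsimp only
    simp only [toAdd_ofAdd, Pi.smul_apply, smul_eq_mul]
    constructor
    · intro i
      rw [pow_succ, mul_assoc]
      exact mul_dvd_mul_left _ ((hx.1 i).mul_left v)
    · rw [pow_succ]
      exact mul_dvd_mul_left _ hx.2
  refine ⟨MulEquiv.ofBijective
    (QuotientGroup.lift _
      (MonoidHom.mk' (fun x => QuotientGroup.mk ⟨x ^ p ^ n, hmem x⟩) hmul)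
      (by intro x hx; rw [MonoidHom.mem_ker]; exact hker x hx)) ⟨?_, ?_⟩, ?_⟩
  · intro q1 q2 hq
    obtain ⟨x, rfl⟩ := QuotientGroup.mk_surjective q1
    obtain ⟨y, rfl⟩ := QuotientGroup.mk_surjective q2
    simp only [QuotientGroup.lift_mk', MonoidHom.mk'_apply] at hq
    have h' := QuotientGroup.eq.mp hq
    rw [Subgroup.mem_subgroupOf] at h'
    simp only [Subgroup.coe_mul, InvMemClass.coe_inv] at h'
    rw [eqn1] at h'
    obtain ⟨hL, hR⟩ := (quot_crit φ hk hφ (n+1)).mp h'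
    obtain ⟨v₂, hv₂, h2⟩ := powM' φ hodd hk hφ n x
    obtain ⟨v₃, hv₃, h3⟩ := powM' φ hodd hk hφ n y
    apply QuotientGroup.eq.mpr
    rw [eq1]
    refine (quot_crit φ hk hφ 1).mpr ⟨fun i => ?_, ?_⟩
    · simp only [pow_one]
      have key : (p:ℤ_[p]) ∣ v₃ * toAdd y.left i - v₂ * toAdd x.left i := by
        apply (hcancel _).mp
        have h := hL i
        rw [h2, h3] at h
        dsimp only at h
        simp only [toAdd_ofAdd, Pi.smul_apply, smul_eq_mul] at h
        rw [show (p:ℤ_[p])^n * (v₃ * toAdd y.left i - v₂ * toAdd x.left i)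
            = (p:ℤ_[p])^n*v₃ * toAdd y.left i - (p:ℤ_[p])^n*v₂ * toAdd x.left i from by ring]
        exact h
      rw [show toAdd y.left i - toAdd x.left i
          = (v₃ * toAdd y.left i - v₂ * toAdd x.left i)
            - (v₃ - 1) * toAdd y.left i + (v₂ - 1) * toAdd x.left i from by ring]
      exact dvd_add (dvd_sub key (hv₃.mul_right _)) (hv₂.mul_right _)
    · simp only [pow_one]
      have key : (p:ℤ_[p]) ∣ toAdd y.right - toAdd x.right := by
        apply (hcancel _).mp
        have h := hR
        rw [h2, h3] at h
        dsimp only at h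
        simp only [toAdd_ofAdd] at h
        rw [show (p:ℤ_[p])^n * (toAdd y.right - toAdd x.right)
            = (p:ℤ_[p])^n * toAdd y.right - (p:ℤ_[p])^n * toAdd x.right from by ring]
        exact h
      exact key
  · intro q
    obtain ⟨ysub, rfl⟩ := QuotientGroup.mk_surjective q
    have hy : (ysub : Multiplicative (I → ℤ_[p]) ⋊[φ] Multiplicative ℤ_[p])
        ∈ Hsub φ hk hφ n := by rw [← eqn]; exact ysub.2
    obtain ⟨x, hx⟩ := Hsub_surj φ hodd hk hφ n hy
    refine ⟨QuotientGroup.mk x, ?_⟩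
    rw [QuotientGroup.lift_mk']
    exact congrArg QuotientGroup.mk (Subtype.ext hx)
  · intro x
    rfl
end
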